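/- arXiv:quant-ph/9807045 — 6 statements merged into one kernel-verified Lean document; each statement's English description precedes it below -/
import Mathlib

section
/- The two factorizations of the baker's map propagator agree: as bounded operators on L²(ℝ), S∘(L + X^{−1}∘R)∘(E_p + Y^{−1/2}∘O_p) = (E_x + X^{−1/2}∘O_x)∘(B + Y^{−1}∘T)∘S. -/
open MeasureTheory Filter Topology

noncomputable section

/-- The Hilbert space `L²(ℝ, ℂ)` with inner product `⟪f,g⟫ = ∫ conj(f x) · g x dx`. -/
abbrev HL2 : Type := MeasureTheory.Lp ℂ 2 (MeasureTheory.volume : MeasureTheory.Measure ℝ)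

/-- Indicator of `⋃ₖ [k, k+1/2)`. -/
def chiL (x : ℝ) : ℂ := if Int.fract x < 1/2 then 1 else 0

/-- Indicator of `⋃ₖ [k+1/2, k+1)`. -/
def chiR (x : ℝ) : ℂ := if 1/2 ≤ Int.fract x then 1 else 0

/-- Indicator of `⋃ₖ [2k, 2k+1)`. -/
def chiE (p : ℝ) : ℂ := if Even ⌊p⌋ then 1 else 0

/-- Indicator of `⋃ₖ [2k+1, 2k+2)`. -/
def chiO (p : ℝ) : ℂ := if Odd ⌊p⌋ then 1 else 0

/-- The `hbar`-scaled Fourier integral formula `(2πhbar)^{−1/2} ∫ e^{−ipx/hbar} f(x) dx`. -/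
def fourierFormula (hbar : ℝ) (f : ℝ → ℂ) (p : ℝ) : ℂ :=
  ((Real.sqrt (2 * Real.pi * hbar) : ℝ) : ℂ)⁻¹ *
    ∫ x : ℝ, Complex.exp (-(Complex.I * (p : ℂ) * (x : ℂ) / (hbar : ℂ))) * f x






lemma bk_qmp_mul {a : ℝ} (ha : a ≠ 0) :
    MeasureTheory.Measure.QuasiMeasurePreserving (fun x : ℝ => a * x) volume volume := by
  refine ⟨(measurable_const_mul a), ?_⟩
  rw [show (fun x : ℝ => a * x) = (a * ·) from rfl, Real.map_volume_mul_left ha]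
  exact Measure.absolutelyContinuous_of_le_smul le_rfl

lemma bk_ae_mul {a : ℝ} (ha : a ≠ 0) {u v : ℝ → ℂ} (h : u =ᵐ[volume] v) :
    (fun x => u (a * x)) =ᵐ[volume] (fun x => v (a * x)) :=
  (bk_qmp_mul ha).ae_eq_comp h

lemma bk_ae_div {a : ℝ} (ha : a ≠ 0) {u v : ℝ → ℂ} (h : u =ᵐ[volume] v) :
    (fun x => u (x / a)) =ᵐ[volume] (fun x => v (x / a)) := by
  simpa [div_eq_inv_mul] using bk_ae_mul (inv_ne_zero ha) h

lemma bk_fract_half (x : ℝ) : Int.fract (x / 2) < 1/2 ↔ Even ⌊x⌋ := by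
  have hx : (⌊x⌋ : ℝ) + Int.fract x = x := Int.floor_add_fract x
  have h0 : (0:ℝ) ≤ Int.fract x := Int.fract_nonneg x
  have h1 : Int.fract x < 1 := Int.fract_lt_one x
  rcases Int.even_or_odd ⌊x⌋ with ⟨k, hk⟩ | ⟨k, hk⟩
  · have hxx : x = (k : ℝ) + k + Int.fract x := by
      have h' := hx; rw [hk] at h'; push_cast at h'; linarith
    have hx2 : x / 2 = Int.fract x / 2 + (k : ℝ) := by linarith
    have : Int.fract (x / 2) = Int.fract x / 2 := by
      rw [hx2, Int.fract_add_intCast]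
      exact Int.fract_eq_self.2 ⟨by linarith, by linarith⟩
    rw [this]
    constructor
    · intro _; exact ⟨k, hk⟩
    · intro _; linarith
  · have hxx : x = 2 * (k : ℝ) + 1 + Int.fract x := by
      have h' := hx; rw [hk] at h'; push_cast at h'; linarith
    have hx2 : x / 2 = (Int.fract x + 1) / 2 + (k : ℝ) := by linarith
    have : Int.fract (x / 2) = (Int.fract x + 1) / 2 := by
      rw [hx2, Int.fract_add_intCast]
      exact Int.fract_eq_self.2 ⟨by linarith, by linarith⟩
    rw [this]
    constructor
    · intro h'; linarith
    · rintro h'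
      exfalso
      exact (Int.not_odd_iff_even.mpr h') ⟨k, hk⟩
  
lemma bk_fract_two (p : ℝ) : Even ⌊2 * p⌋ ↔ Int.fract p < 1/2 := by
  have hx : (⌊p⌋ : ℝ) + Int.fract p = p := Int.floor_add_fract p
  have h0 : (0:ℝ) ≤ Int.fract p := Int.fract_nonneg p
  have h1 : Int.fract p < 1 := Int.fract_lt_one p
  have hp2 : 2 * p = 2 * Int.fract p + ((2 * ⌊p⌋ : ℤ) : ℝ) := by push_cast; linarith
  by_cases h : Int.fract p < 1/2
  · have : ⌊2 * p⌋ = 2 * ⌊p⌋ := by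
      rw [hp2, Int.floor_add_intCast, Int.floor_eq_zero_iff.2 ⟨by linarith, by linarith⟩, zero_add]
    simp only [this, h, iff_true]
    exact ⟨⌊p⌋, two_mul _⟩
  · push_neg at h
    have : ⌊2 * p⌋ = 2 * ⌊p⌋ + 1 := by
      have hfl : ⌊2 * Int.fract p⌋ = 1 :=
        Int.floor_eq_iff.2 ⟨by push_cast; linarith, by push_cast; linarith⟩
      rw [hp2, Int.floor_add_intCast, hfl, add_comm]
    rw [this]
    simp only [iff_false, not_lt.2 h]
    intro hc
    exact (Int.even_add_one.mp hc) (even_two_mul ⌊p⌋)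

lemma bk_chiE_half (x : ℝ) : chiL (x / 2) = chiE x := by
  unfold chiL chiE
  exact if_congr (bk_fract_half x) rfl rfl

lemma bk_chiO_half (x : ℝ) : chiR (x / 2) = chiO x := by
  unfold chiR chiO
  refine if_congr ?_ rfl rfl
  rw [not_iff_not.symm]
  simp only [not_le, Int.not_odd_iff_even]
  exact bk_fract_half x

lemma bk_chiL_two (p : ℝ) : chiE (2 * p) = chiL p := by
  unfold chiL chiE
  exact if_congr (bk_fract_two p) rfl rfl

lemma bk_chiR_two (p : ℝ) : chiO (2 * p) = chiR p := by
  unfold chiR chiO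
  refine if_congr ?_ rfl rfl
  rw [not_iff_not.symm]
  simp only [not_le, Int.not_odd_iff_even]
  exact bk_fract_two p


open scoped ENNReal NNReal

def bk_dilFun (u : ℝ → ℂ) : ℝ → ℂ := fun x => ((Real.sqrt 2 : ℝ) : ℂ) * u (2 * x)

lemma bk_mp : MeasureTheory.MeasurePreserving (fun x : ℝ => 2 * x) volume
    (ENNReal.ofReal |(2:ℝ)⁻¹| • volume) :=
  ⟨measurable_const_mul 2, Real.map_volume_mul_left two_ne_zero⟩

lemma bk_dil_eLpNorm (g : HL2) :
    eLpNorm (bk_dilFun ⇑g) 2 volume ≤ 2 * eLpNorm (⇑g) 2 volume := by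
  have hsm : AEStronglyMeasurable (⇑g) (ENNReal.ofReal |(2:ℝ)⁻¹| • volume) :=
    (Lp.aestronglyMeasurable g).mono_measure
      (by rw [Measure.le_iff']; intro s
          simpa using mul_le_of_le_one_left zero_le
            (ENNReal.ofReal_le_one.2 (by rw [abs_of_pos] <;> norm_num) : ENNReal.ofReal |(2:ℝ)⁻¹| ≤ 1))
  have e1 : eLpNorm (fun x => g (2 * x)) 2 volume
      = eLpNorm (⇑g) 2 (ENNReal.ofReal |(2:ℝ)⁻¹| • volume) :=
    eLpNorm_comp_measurePreserving hsm bk_mp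
  have e2 : eLpNorm (⇑g) 2 (ENNReal.ofReal |(2:ℝ)⁻¹| • volume)
      ≤ eLpNorm (⇑g) 2 volume := by
    rw [eLpNorm_smul_measure_of_ne_top (by norm_num), smul_eq_mul]
    refine mul_le_of_le_one_left zero_le ?_
    exact ENNReal.rpow_le_one (ENNReal.ofReal_le_one.2 (by rw [abs_of_pos] <;> norm_num))
      (by simp)
  have e0 : bk_dilFun ⇑g = ((Real.sqrt 2 : ℝ) : ℂ) • (fun x => g (2 * x)) := rfl
  rw [e0, eLpNorm_const_smul]
  have h2 : (‖((Real.sqrt 2 : ℝ) : ℂ)‖₊ : ℝ≥0∞) ≤ 2 := by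
    have h2' : ‖((Real.sqrt 2 : ℝ) : ℂ)‖ ≤ 2 := by
      rw [Complex.norm_real, Real.norm_eq_abs, abs_of_nonneg (Real.sqrt_nonneg 2)]
      nlinarith [Real.sq_sqrt (by norm_num : (2:ℝ) ≥ 0), Real.sqrt_nonneg 2]
    exact_mod_cast (by exact_mod_cast h2' : (‖((Real.sqrt 2 : ℝ) : ℂ)‖₊ : ℝ) ≤ 2)
  refine mul_le_mul h2 ?_ zero_le (by norm_num)
  rw [e1]; exact e2
  
lemma bk_dil_memℒp (g : HL2) : MemLp (bk_dilFun ⇑g) 2 (volume : Measure ℝ) := by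
  refine ⟨((Lp.aestronglyMeasurable g).comp_quasiMeasurePreserving
    (bk_qmp_mul two_ne_zero)).const_mul _, ?_⟩
  exact lt_of_le_of_lt (bk_dil_eLpNorm g)
    (by
      have := Lp.eLpNorm_lt_top g
      exact ENNReal.mul_lt_top (by norm_num) this)

def bk_dilL : HL2 →ₗ[ℂ] HL2 where
  toFun g := (bk_dil_memℒp g).toLp (bk_dilFun ⇑g)
  map_add' g h := by
    apply Lp.ext
    filter_upwards [MemLp.coeFn_toLp (bk_dil_memℒp (g + h)),
      MemLp.coeFn_toLp (bk_dil_memℒp g), MemLp.coeFn_toLp (bk_dil_memℒp h),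
      Lp.coeFn_add ((bk_dil_memℒp g).toLp _) ((bk_dil_memℒp h).toLp _),
      bk_ae_mul two_ne_zero (Lp.coeFn_add g h)] with x h1 h2 h3 h4 h5
    rw [h1, h4, Pi.add_apply, h2, h3]
    simp only [bk_dilFun]
    rw [h5]
    simp [mul_add]
  map_smul' c g := by
    apply Lp.ext
    filter_upwards [MemLp.coeFn_toLp (bk_dil_memℒp (c • g)),
      MemLp.coeFn_toLp (bk_dil_memℒp g),
      Lp.coeFn_smul c ((bk_dil_memℒp g).toLp _),
      bk_ae_mul two_ne_zero (Lp.coeFn_smul c g)] with x h1 h2 h3 h4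
    rw [h1, RingHom.id_apply, h3, Pi.smul_apply, h2]
    simp only [bk_dilFun]
    rw [h4]
    simp [smul_eq_mul]
    ring

def bk_dil : HL2 →L[ℂ] HL2 :=
  bk_dilL.mkContinuous 2 (by
    intro g
    show ‖(bk_dil_memℒp g).toLp (bk_dilFun ⇑g)‖ ≤ 2 * ‖g‖
    rw [Lp.norm_toLp, Lp.norm_def]
    have h := bk_dil_eLpNorm g
    have hfin : (2 : ℝ≥0∞) * eLpNorm (⇑g) 2 volume ≠ ⊤ :=
      ENNReal.mul_ne_top (by norm_num) (Lp.eLpNorm_ne_top g)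
    calc (eLpNorm (bk_dilFun ⇑g) 2 volume).toReal
        ≤ ((2 : ℝ≥0∞) * eLpNorm (⇑g) 2 volume).toReal := ENNReal.toReal_mono hfin h
      _ = 2 * (eLpNorm (⇑g) 2 volume).toReal := by
          rw [ENNReal.toReal_mul]; norm_num)

lemma bk_dil_coe (g : HL2) :
    ⇑(bk_dil g) =ᵐ[volume] fun x => ((Real.sqrt 2 : ℝ) : ℂ) * g (2 * x) :=
  MemLp.coeFn_toLp (bk_dil_memℒp g)

lemma bk_dense : Dense {f : HL2 | Integrable (⇑f) volume} := by
  rw [Metric.dense_iff]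
  intro f r hr
  obtain ⟨g, hgsupp, hgnorm, hgcont, hgmem⟩ :=
    (Lp.memLp f).exists_hasCompactSupport_eLpNorm_sub_le (p := 2) (by norm_num)
      (ε := ENNReal.ofReal (r/2)) (by rw [Ne, ENNReal.ofReal_eq_zero]; push_neg; linarith)
  refine ⟨hgmem.toLp g, Metric.mem_ball.2 ?_, ?_⟩
  · have key : dist (hgmem.toLp g) f = (eLpNorm (g - ⇑f) 2 volume).toReal := by
      rw [dist_eq_norm, Lp.norm_def]
      congr 1
      apply eLpNorm_congr_ae
      filter_upwards [Lp.coeFn_sub (hgmem.toLp g) f, MemLp.coeFn_toLp hgmem] with x h1 h2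
      rw [h1, Pi.sub_apply, h2]
      simp [Pi.sub_apply]
    have hsy : eLpNorm (g - ⇑f) 2 volume = eLpNorm (⇑f - g) 2 volume := by
      rw [← eLpNorm_neg]; congr 1; ext x; simp
    rw [key, hsy]
    calc (eLpNorm (⇑f - g) 2 volume).toReal ≤ r/2 :=
          ENNReal.toReal_le_of_le_ofReal (by linarith) hgnorm
      _ < r := by linarith
  · exact (hgcont.integrable_of_hasCompactSupport hgsupp).congr
      (MemLp.coeFn_toLp hgmem).symm


open Complex


lemma bk_fourier_translate (hbar : ℝ) (s : ℝ) (f : ℝ → ℂ) (p : ℝ) :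
    fourierFormula hbar (fun x => f (x + s)) p
      = Complex.exp (Complex.I * (s:ℂ) * (p:ℂ) / (hbar:ℂ)) * fourierFormula hbar f p := by
  unfold fourierFormula
  set g : ℝ → ℂ := fun u => Complex.exp (-(Complex.I * (p:ℂ) * ((u - s : ℝ):ℂ) / (hbar:ℂ))) * f u
    with hg
  have h1 : (fun x : ℝ => Complex.exp (-(Complex.I * (p:ℂ) * (x:ℂ) / (hbar:ℂ))) * f (x + s))
      = fun x : ℝ => g (x + s) := by
    funext x
    rw [hg]
    simp only
    rw [show ((x + s - s : ℝ) : ℂ) = (x : ℂ) by push_cast; ring]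
  rw [h1, integral_add_right_eq_self g s]
  have h2 : g = fun u : ℝ => Complex.exp (Complex.I * (s:ℂ) * (p:ℂ) / (hbar:ℂ)) *
      (Complex.exp (-(Complex.I * (p:ℂ) * (u:ℂ) / (hbar:ℂ))) * f u) := by
    funext u
    rw [hg]
    simp only
    rw [← mul_assoc, ← Complex.exp_add]
    congr 2
    push_cast
    ring
  rw [h2, integral_const_mul]
  ring

lemma bk_fourier_dil (hbar : ℝ) (f : ℝ → ℂ) (p : ℝ) :
    fourierFormula hbar (fun x => ((Real.sqrt 2 : ℝ) : ℂ)⁻¹ * f (x / 2)) p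
      = ((Real.sqrt 2 : ℝ) : ℂ) * fourierFormula hbar f (2 * p) := by
  have hs2 : ((Real.sqrt 2 : ℝ) : ℂ) * ((Real.sqrt 2 : ℝ) : ℂ) = 2 := by
    norm_cast
    exact Real.mul_self_sqrt (by norm_num)
  have hsne : ((Real.sqrt 2 : ℝ) : ℂ) ≠ 0 := by
    simp only [ne_eq, Complex.ofReal_eq_zero]
    positivity
  unfold fourierFormula
  set g : ℝ → ℂ := fun u => Complex.exp (-(Complex.I * (p:ℂ) * ((2 * u : ℝ):ℂ) / (hbar:ℂ))) *
      (((Real.sqrt 2 : ℝ) : ℂ)⁻¹ * f u) with hg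
  have h1 : (fun x : ℝ => Complex.exp (-(Complex.I * (p:ℂ) * (x:ℂ) / (hbar:ℂ))) *
      (((Real.sqrt 2 : ℝ) : ℂ)⁻¹ * f (x / 2))) = fun x => g (x / 2) := by
    funext x
    rw [hg]
    simp only
    rw [show ((2 * (x / 2) : ℝ) : ℂ) = (x : ℂ) by push_cast; ring]
  rw [h1, MeasureTheory.Measure.integral_comp_div g 2]
  have h2 : g = fun u : ℝ => ((Real.sqrt 2 : ℝ) : ℂ)⁻¹ *
      (Complex.exp (-(Complex.I * ((2 * p : ℝ):ℂ) * (u:ℂ) / (hbar:ℂ))) * f u) := by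
    funext u
    rw [hg]
    simp only
    rw [show (-(Complex.I * (p:ℂ) * ((2 * u : ℝ):ℂ) / (hbar:ℂ)))
        = (-(Complex.I * ((2 * p : ℝ):ℂ) * (u:ℂ) / (hbar:ℂ))) by push_cast; ring]
    ring
  rw [h2, integral_const_mul, abs_of_pos (by norm_num : (0:ℝ) < 2), Complex.real_smul]
  have key : ((2:ℝ):ℂ) * ((Real.sqrt 2 : ℝ) : ℂ)⁻¹ = ((Real.sqrt 2 : ℝ) : ℂ) := by
    rw [show ((2:ℝ):ℂ) = ((Real.sqrt 2 : ℝ) : ℂ) * ((Real.sqrt 2 : ℝ) : ℂ) by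
      rw [hs2]; norm_num]
    field_simp
  set C := ((Real.sqrt (2 * Real.pi * hbar) : ℝ) : ℂ)⁻¹
  set T := ∫ u : ℝ, Complex.exp (-(Complex.I * ((2 * p : ℝ):ℂ) * ((u:ℝ):ℂ) / (hbar:ℂ))) * f u
  calc C * (((2:ℝ):ℂ) * (((Real.sqrt 2 : ℝ) : ℂ)⁻¹ * T))
      = (((2:ℝ):ℂ) * ((Real.sqrt 2 : ℝ) : ℂ)⁻¹) * (C * T) := by ring
    _ = ((Real.sqrt 2 : ℝ) : ℂ) * (C * T) := by rw [key]



/-- The two factorizations of the baker's map propagator agree: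
`S (L + X^{−1} R)(E_p + Y^{−1/2} O_p) = (E_x + X^{−1/2} O_x)(B + Y^{−1} T) S`
as bounded operators on `L²(ℝ)`. -/
theorem bakerPropagator_two_factorizations (hbar : ℝ) (hhb : 0 < hbar)
    (𝓕 : HL2 ≃ₗᵢ[ℂ] HL2)
    (h𝓕 : ∀ f : HL2, Integrable (⇑f) volume → ⇑(𝓕 f) =ᵐ[volume] fourierFormula hbar (⇑f))
    (L R Ex Ox B T Ep Op S : HL2 →L[ℂ] HL2) (X Y : ℝ → HL2 →L[ℂ] HL2)
    (hL : ∀ f : HL2, ⇑(L f) =ᵐ[volume] fun x => chiL x * f x)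
    (hR : ∀ f : HL2, ⇑(R f) =ᵐ[volume] fun x => chiR x * f x)
    (hEx : ∀ f : HL2, ⇑(Ex f) =ᵐ[volume] fun x => chiE x * f x)
    (hOx : ∀ f : HL2, ⇑(Ox f) =ᵐ[volume] fun x => chiO x * f x)
    (hB : ∀ f : HL2, ⇑(𝓕 (B f)) =ᵐ[volume] fun p => chiL p * (𝓕 f) p)
    (hT : ∀ f : HL2, ⇑(𝓕 (T f)) =ᵐ[volume] fun p => chiR p * (𝓕 f) p)
    (hEp : ∀ f : HL2, ⇑(𝓕 (Ep f)) =ᵐ[volume] fun p => chiE p * (𝓕 f) p)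
    (hOp : ∀ f : HL2, ⇑(𝓕 (Op f)) =ᵐ[volume] fun p => chiO p * (𝓕 f) p)
    (hX : ∀ s : ℝ, ∀ f : HL2,
      ⇑(X s f) =ᵐ[volume] fun x => Complex.exp (Complex.I * s * x / hbar) * f x)
    (hY : ∀ s : ℝ, ∀ f : HL2, ⇑(Y s f) =ᵐ[volume] fun x => f (x + s))
    (hS : ∀ f : HL2, ⇑(S f) =ᵐ[volume] fun x => ((Real.sqrt 2 : ℝ) : ℂ)⁻¹ * f (x / 2)) :
    S ∘L (L + X (-1) ∘L R) ∘L (Ep + Y (-(1/2)) ∘L Op)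
      = (Ex + X (-(1/2)) ∘L Ox) ∘L (B + Y (-1) ∘L T) ∘L S := by
  classical
  -- Fourier transform intertwines translation with modulation
  have hYX : ∀ s : ℝ, ∀ f : HL2, 𝓕 (Y s f) = X s (𝓕 f) := by
    intro s
    have hfun : (fun f : HL2 => 𝓕 (Y s f)) = fun f : HL2 => X s (𝓕 f) := by
      apply Continuous.ext_on bk_dense
      · exact 𝓕.continuous.comp (Y s).continuous
      · exact (X s).continuous.comp 𝓕.continuous
      · intro f hf
        simp only [Set.mem_setOf_eq] at hf
        have hint : Integrable (fun x => f (x + s)) volume := hf.comp_add_right s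
        have hYint : Integrable (⇑(Y s f)) volume := hint.congr (hY s f).symm
        have e2 : fourierFormula hbar (⇑(Y s f)) = fourierFormula hbar (fun x => f (x + s)) := by
          funext p; unfold fourierFormula; congr 1
          exact integral_congr_ae ((hY s f).mono fun x hx => by dsimp only; rw [hx])
        apply Lp.ext
        filter_upwards [h𝓕 _ hYint, hX s (𝓕 f), h𝓕 f hf] with p h1 h2 h3
        rw [h1, e2, bk_fourier_translate hbar s (⇑f) p, h2, h3]
    exact fun f => congrFun hfun f
  -- Fourier transform intertwines the scaling operator with the inverse dilation
  have hFS : ∀ f : HL2, 𝓕 (S f) = bk_dil (𝓕 f) := by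
    have hfun : (fun f : HL2 => 𝓕 (S f)) = fun f : HL2 => bk_dil (𝓕 f) := by
      apply Continuous.ext_on bk_dense
      · exact 𝓕.continuous.comp S.continuous
      · exact bk_dil.continuous.comp 𝓕.continuous
      · intro f hf
        simp only [Set.mem_setOf_eq] at hf
        have hint : Integrable (fun x => ((Real.sqrt 2 : ℝ) : ℂ)⁻¹ * f (x / 2)) volume :=
          (hf.comp_div two_ne_zero).const_mul _
        have hSint : Integrable (⇑(S f)) volume := hint.congr (hS f).symm
        have e2 : fourierFormula hbar (⇑(S f))
            = fourierFormula hbar (fun x => ((Real.sqrt 2 : ℝ) : ℂ)⁻¹ * f (x / 2)) := by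
          funext p; unfold fourierFormula; congr 1
          exact integral_congr_ae ((hS f).mono fun x hx => by dsimp only; rw [hx])
        apply Lp.ext
        filter_upwards [h𝓕 _ hSint, bk_dil_coe (𝓕 f),
          bk_ae_mul two_ne_zero (h𝓕 f hf)] with p h1 h2 h3
        rw [h1, e2, bk_fourier_dil hbar (⇑f) p, h2, h3]
    exact fun f => congrFun hfun f
  -- the two multiplier functions
  set bb : ℝ → ℂ := fun x =>
    chiE x + Complex.exp (Complex.I * ((-(1/2) : ℝ) : ℂ) * (x : ℂ) / (hbar : ℂ)) * chiO x
    with hbb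
  set aa : ℝ → ℂ := fun p =>
    chiL p + Complex.exp (Complex.I * ((-1 : ℝ) : ℂ) * (p : ℂ) / (hbar : ℂ)) * chiR p
    with haa
  have hba : ∀ p : ℝ, bb (2 * p) = aa p := by
    intro p
    simp only [hbb, haa]
    rw [bk_chiL_two p, bk_chiR_two p,
      show Complex.I * ((-(1/2) : ℝ) : ℂ) * ((2 * p : ℝ) : ℂ) / (hbar : ℂ)
        = Complex.I * ((-1 : ℝ) : ℂ) * ((p : ℝ) : ℂ) / (hbar : ℂ) by push_cast; ring]
  have hab : ∀ x : ℝ,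
      chiL (x / 2) + Complex.exp (Complex.I * ((-1 : ℝ) : ℂ) * ((x / 2 : ℝ) : ℂ) / (hbar : ℂ))
        * chiR (x / 2) = bb x := by
    intro x
    simp only [hbb]
    rw [bk_chiE_half x, bk_chiO_half x,
      show Complex.I * ((-1 : ℝ) : ℂ) * ((x / 2 : ℝ) : ℂ) / (hbar : ℂ)
        = Complex.I * ((-(1/2) : ℝ) : ℂ) * ((x : ℝ) : ℂ) / (hbar : ℂ) by push_cast; ring]
  -- the momentum-side multiplier of Ep + Y(-1/2) Op
  have hPcoe : ∀ f : HL2, ⇑(𝓕 ((Ep + Y (-(1/2)) ∘L Op) f)) =ᵐ[volume]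
      fun p => bb p * ⇑(𝓕 f) p := by
    intro f
    have hsum : (Ep + Y (-(1/2)) ∘L Op) f = Ep f + Y (-(1/2)) (Op f) := rfl
    rw [hsum, map_add]
    have h3 : ⇑(𝓕 (Y (-(1/2)) (Op f))) =ᵐ[volume]
        fun p => Complex.exp (Complex.I * ((-(1/2) : ℝ) : ℂ) * (p : ℂ) / (hbar : ℂ))
          * ⇑(𝓕 (Op f)) p := by
      rw [hYX (-(1/2)) (Op f)]
      exact hX _ _
    filter_upwards [Lp.coeFn_add (𝓕 (Ep f)) (𝓕 (Y (-(1/2)) (Op f))), hEp f, h3, hOp f]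
      with p e1 e2 e3 e4
    rw [e1, Pi.add_apply, e2, e3, e4]
    simp only [hbb]
    ring
  -- the momentum-side multiplier of B + Y(-1) T
  have hQcoe : ∀ g : HL2, ⇑(𝓕 ((B + Y (-1) ∘L T) g)) =ᵐ[volume]
      fun p => aa p * ⇑(𝓕 g) p := by
    intro g
    have hsum : (B + Y (-1) ∘L T) g = B g + Y (-1) (T g) := rfl
    rw [hsum, map_add]
    have h3 : ⇑(𝓕 (Y (-1) (T g))) =ᵐ[volume]
        fun p => Complex.exp (Complex.I * ((-1 : ℝ) : ℂ) * (p : ℂ) / (hbar : ℂ))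
          * ⇑(𝓕 (T g)) p := by
      rw [hYX (-1) (T g)]
      exact hX _ _
    filter_upwards [Lp.coeFn_add (𝓕 (B g)) (𝓕 (Y (-1) (T g))), hB g, h3, hT g]
      with p e1 e2 e3 e4
    rw [e1, Pi.add_apply, e2, e3, e4]
    simp only [haa]
    ring
  -- key exchange identity : S ∘ (Ep + Y(-1/2) Op) = (B + Y(-1) T) ∘ S
  have hkey : ∀ f : HL2, S ((Ep + Y (-(1/2)) ∘L Op) f) = (B + Y (-1) ∘L T) (S f) := by
    intro f
    apply 𝓕.injective
    apply Lp.ext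
    have hSu : ⇑(𝓕 (S ((Ep + Y (-(1/2)) ∘L Op) f))) =ᵐ[volume]
        fun p => ((Real.sqrt 2 : ℝ) : ℂ) * ⇑(𝓕 ((Ep + Y (-(1/2)) ∘L Op) f)) (2 * p) := by
      rw [hFS]
      exact bk_dil_coe _
    have hSf : ⇑(𝓕 (S f)) =ᵐ[volume]
        fun p => ((Real.sqrt 2 : ℝ) : ℂ) * ⇑(𝓕 f) (2 * p) := by
      rw [hFS]
      exact bk_dil_coe _
    filter_upwards [hSu, bk_ae_mul two_ne_zero (hPcoe f), hQcoe (S f),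
      (hQcoe (S f)).mono (fun p hp => hp), hSf] with p e1 e2 e3 _ e5
    rw [e1, e2, e3, e5]
    rw [← hba p]
    ring
  -- now the pointwise multiplier identity on the position side
  apply ContinuousLinearMap.ext
  intro f
  simp only [ContinuousLinearMap.coe_comp', Function.comp_apply]
  set u : HL2 := (Ep + Y (-(1/2)) ∘L Op) f with hu
  have hkeyf : S u = (B + Y (-1) ∘L T) (S f) := hkey f
  set v : HL2 := (B + Y (-1) ∘L T) (S f) with hv
  -- left-hand side
  have hwsum : (L + X (-1) ∘L R) u = L u + X (-1) (R u) := rfl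
  have hwcoe : ⇑(L u + X (-1) (R u)) =ᵐ[volume] fun x =>
      (chiL x + Complex.exp (Complex.I * ((-1 : ℝ) : ℂ) * (x : ℂ) / (hbar : ℂ)) * chiR x)
        * ⇑u x := by
    filter_upwards [Lp.coeFn_add (L u) (X (-1) (R u)), hL u, hX (-1) (R u), hR u]
      with x e1 e2 e3 e4
    rw [e1, Pi.add_apply, e2, e3, e4]
    ring
  have hlhs : ⇑(S ((L + X (-1) ∘L R) u)) =ᵐ[volume] fun x => bb x * ⇑(S u) x := by
    rw [hwsum]
    filter_upwards [hS (L u + X (-1) (R u)), bk_ae_div two_ne_zero hwcoe, hS u]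
      with x e1 e2 e3
    rw [e1, e2, e3, ← hab x]
    push_cast
    ring
  -- right-hand side
  have hrhs : ⇑((Ex + X (-(1/2)) ∘L Ox) v) =ᵐ[volume] fun x => bb x * ⇑v x := by
    have hsum : (Ex + X (-(1/2)) ∘L Ox) v = Ex v + X (-(1/2)) (Ox v) := rfl
    rw [hsum]
    filter_upwards [Lp.coeFn_add (Ex v) (X (-(1/2)) (Ox v)), hEx v, hX (-(1/2)) (Ox v), hOx v]
      with x e1 e2 e3 e4
    rw [e1, Pi.add_apply, e2, e3, e4]
    simp only [hbb]
    ring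
  apply Lp.ext
  rw [hkeyf] at hlhs
  filter_upwards [hlhs, hrhs] with x e1 e2
  rw [e1]
  exact e2.symm


end
end

section
/- The baker's map propagator F := S∘(L + X^{−1}∘R)∘(E_p + Y^{−1/2}∘O_p) is a unitary operator on L²(ℝ). -/
open MeasureTheory Filter Topology
open scoped ENNReal NNReal

noncomputable section

namespace BakerAux

/-! ### Multiplication by a unimodular function as a linear isometry -/

lemma memL2_mul {m : ℝ → ℂ} (hm : Measurable m) (hm1 : ∀ x, ‖m x‖ = 1) (f : HL2) :
    MemLp (fun x => m x * f x) 2 (volume : Measure ℝ) :=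
  ⟨hm.aestronglyMeasurable.mul (Lp.aestronglyMeasurable f), by
    rw [eLpNorm_congr_norm_ae (g := ⇑f) (Eventually.of_forall fun x => by
      rw [norm_mul, hm1, one_mul])]
    exact Lp.eLpNorm_lt_top f⟩

def mulLI {m : ℝ → ℂ} (hm : Measurable m) (hm1 : ∀ x, ‖m x‖ = 1) : HL2 →ₗᵢ[ℂ] HL2 where
  toFun f := (memL2_mul hm hm1 f).toLp _
  map_add' f g := by
    rw [← MemLp.toLp_add (memL2_mul hm hm1 f) (memL2_mul hm hm1 g)]
    refine MemLp.toLp_congr _ _ ?_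
    filter_upwards [Lp.coeFn_add f g] with x hx
    simp only [hx, Pi.add_apply]
    ring
  map_smul' c f := by
    simp only [RingHom.id_apply]
    rw [← MemLp.toLp_const_smul c (memL2_mul hm hm1 f)]
    refine MemLp.toLp_congr _ _ ?_
    filter_upwards [Lp.coeFn_smul c f] with x hx
    simp only [hx, Pi.smul_apply, smul_eq_mul]
    ring
  norm_map' f := by
    show ‖(memL2_mul hm hm1 f).toLp _‖ = ‖f‖
    rw [Lp.norm_toLp, eLpNorm_congr_norm_ae (g := ⇑f) (Eventually.of_forall fun x => by
      rw [norm_mul, hm1, one_mul]), ← Lp.norm_def]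

lemma coeFn_mulLI {m : ℝ → ℂ} (hm : Measurable m) (hm1 : ∀ x, ‖m x‖ = 1) (f : HL2) :
    ⇑(mulLI hm hm1 f) =ᵐ[volume] fun x => m x * f x :=
  MemLp.coeFn_toLp (memL2_mul hm hm1 f)

lemma norm_eq_of_ae_unit {m : ℝ → ℂ} (hm1 : ∀ x, ‖m x‖ = 1) {u f : HL2}
    (hu : ⇑u =ᵐ[volume] fun x => m x * f x) : ‖u‖ = ‖f‖ := by
  rw [Lp.norm_def, Lp.norm_def, eLpNorm_congr_ae hu,
    eLpNorm_congr_norm_ae (g := ⇑f) (Eventually.of_forall fun x => by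
      rw [norm_mul, hm1, one_mul])]

lemma surj_of_mul_inverse {T : HL2 →L[ℂ] HL2} {m minv : ℝ → ℂ}
    (hmeas : Measurable minv) (hninv : ∀ x, ‖minv x‖ = 1)
    (hcoe : ∀ f : HL2, ⇑(T f) =ᵐ[volume] fun x => m x * f x)
    (hinv : ∀ (x : ℝ) (c : ℂ), m x * (minv x * c) = c) : Function.Surjective T := by
  intro g
  refine ⟨(memL2_mul hmeas hninv g).toLp _, Lp.ext ?_⟩
  filter_upwards [hcoe ((memL2_mul hmeas hninv g).toLp _),
    MemLp.coeFn_toLp (memL2_mul hmeas hninv g)] with x h1 h2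
  rw [h1, h2, hinv]

/-! ### Scaling change of variables -/

lemma lintegral_comp_mul (a : ℝ) (ha : a ≠ 0) (g : ℝ → ℝ≥0∞) (hg : AEMeasurable g volume) :
    ∫⁻ x, g (a * x) = ENNReal.ofReal |a⁻¹| * ∫⁻ x, g x := by
  have hmap : Measure.map (fun x : ℝ => a * x) volume = ENNReal.ofReal |a⁻¹| • volume :=
    Real.map_volume_mul_left ha
  have h1 : AEMeasurable g (Measure.map (fun x : ℝ => a * x) volume) := by
    rw [hmap]; exact hg.smul_measure _
  rw [← lintegral_map' h1 (measurable_const_mul a).aemeasurable, hmap, lintegral_smul_measure, smul_eq_mul]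

lemma eLpNorm2_comp_mul (a : ℝ) (ha : a ≠ 0) (f : ℝ → ℂ) (hf : AEStronglyMeasurable f volume) :
    eLpNorm (fun x => f (a * x)) 2 volume
      = ENNReal.ofReal |a⁻¹| ^ ((1:ℝ)/2) * eLpNorm f 2 volume := by
  rw [eLpNorm_eq_lintegral_rpow_enorm_toReal two_ne_zero ENNReal.ofNat_ne_top,
    eLpNorm_eq_lintegral_rpow_enorm_toReal two_ne_zero ENNReal.ofNat_ne_top]
  have h2 : ((2:ℝ≥0∞)).toReal = (2:ℝ) := by simp
  rw [h2]
  have hmeas : AEMeasurable (fun x : ℝ => ‖f x‖ₑ ^ (2:ℝ)) volume :=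
    hf.enorm.pow aemeasurable_const
  rw [show (fun x : ℝ => ‖f (a * x)‖ₑ ^ (2:ℝ))
      = fun x : ℝ => (fun y : ℝ => ‖f y‖ₑ ^ (2:ℝ)) (a * x) from rfl,
    lintegral_comp_mul a ha _ hmeas,
    ENNReal.mul_rpow_of_nonneg _ _ (by norm_num : (0:ℝ) ≤ 1/2)]

/-! ### Measurability and unimodularity of the multipliers -/

lemma measurable_chiL : Measurable chiL :=
  Measurable.ite (measurableSet_lt measurable_fract measurable_const)
    measurable_const measurable_const

lemma measurable_chiR : Measurable chiR :=
  Measurable.ite (measurableSet_le measurable_const measurable_fract)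
    measurable_const measurable_const

lemma measurable_chiE : Measurable chiE := by
  unfold chiE
  refine Measurable.ite ?_ measurable_const measurable_const
  have h : {a : ℝ | Even ⌊a⌋} = Int.floor ⁻¹' {n : ℤ | Even n} := rfl
  rw [h]
  exact Int.measurable_floor trivial

lemma measurable_chiO : Measurable chiO := by
  unfold chiO
  refine Measurable.ite ?_ measurable_const measurable_const
  have h : {a : ℝ | Odd ⌊a⌋} = Int.floor ⁻¹' {n : ℤ | Odd n} := rfl
  rw [h]
  exact Int.measurable_floor trivial

/-- The phase `e^{ips/hbar}`. -/
def phase (h s : ℝ) (p : ℝ) : ℂ := Complex.exp (Complex.I * (p : ℂ) * (s : ℂ) / (h : ℂ))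

lemma measurable_phase (h s : ℝ) : Measurable (phase h s) :=
  (Complex.continuous_exp.comp
    (((continuous_const.mul Complex.continuous_ofReal).mul continuous_const).div_const
      _)).measurable

lemma norm_phase (h s : ℝ) (p : ℝ) : ‖phase h s p‖ = 1 := by
  unfold phase
  rw [show Complex.I * (p : ℂ) * (s : ℂ) / (h : ℂ) = ((p * s / h : ℝ) : ℂ) * Complex.I by
    push_cast; ring]
  exact Complex.norm_exp_ofReal_mul_I _

/-- Position-space multiplier of `L + X^{-1} R`. -/
def mA (h : ℝ) (x : ℝ) : ℂ :=
  chiL x + Complex.exp (Complex.I * ((-1 : ℝ) : ℂ) * (x : ℂ) / (h : ℂ)) * chiR x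

/-- Inverse multiplier of `mA`. -/
def mA' (h : ℝ) (x : ℝ) : ℂ :=
  chiL x + Complex.exp (Complex.I * ((1 : ℝ) : ℂ) * (x : ℂ) / (h : ℂ)) * chiR x

lemma measurable_expA (h : ℝ) (c : ℝ) :
    Measurable fun x : ℝ => Complex.exp (Complex.I * ((c : ℝ) : ℂ) * (x : ℂ) / (h : ℂ)) :=
  (Complex.continuous_exp.comp
    ((continuous_const.mul Complex.continuous_ofReal).div_const _)).measurable

lemma measurable_mA (h : ℝ) : Measurable (mA h) :=
  measurable_chiL.add ((measurable_expA h (-1)).mul measurable_chiR)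

lemma measurable_mA' (h : ℝ) : Measurable (mA' h) :=
  measurable_chiL.add ((measurable_expA h 1).mul measurable_chiR)

lemma norm_expA (h c : ℝ) (x : ℝ) :
    ‖Complex.exp (Complex.I * ((c : ℝ) : ℂ) * (x : ℂ) / (h : ℂ))‖ = 1 := by
  rw [show Complex.I * ((c : ℝ) : ℂ) * (x : ℂ) / (h : ℂ) = ((c * x / h : ℝ) : ℂ) * Complex.I by
    push_cast; ring]
  exact Complex.norm_exp_ofReal_mul_I _

lemma norm_mA (h : ℝ) (x : ℝ) : ‖mA h x‖ = 1 := by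
  unfold mA chiL chiR
  rcases lt_or_ge (Int.fract x) (1/2) with hx | hx
  · rw [if_pos hx, if_neg (not_le.mpr hx)]
    simp
  · rw [if_neg (not_lt.mpr hx), if_pos hx, zero_add, mul_one]
    exact norm_expA h (-1) x

lemma norm_mA' (h : ℝ) (x : ℝ) : ‖mA' h x‖ = 1 := by
  unfold mA' chiL chiR
  rcases lt_or_ge (Int.fract x) (1/2) with hx | hx
  · rw [if_pos hx, if_neg (not_le.mpr hx)]
    simp
  · rw [if_neg (not_lt.mpr hx), if_pos hx, zero_add, mul_one]
    exact norm_expA h 1 x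

lemma mA_mul_mA' (h : ℝ) (x : ℝ) (c : ℂ) : mA h x * (mA' h x * c) = c := by
  unfold mA mA' chiL chiR
  rcases lt_or_ge (Int.fract x) (1/2) with hx | hx
  · rw [if_pos hx, if_neg (not_le.mpr hx)]
    simp
  · rw [if_neg (not_lt.mpr hx), if_pos hx]
    simp only [zero_add, mul_one]
    rw [← mul_assoc, ← Complex.exp_add,
      show Complex.I * ((-1 : ℝ) : ℂ) * (x : ℂ) / (h : ℂ)
          + Complex.I * ((1 : ℝ) : ℂ) * (x : ℂ) / (h : ℂ) = 0 by push_cast; ring,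
      Complex.exp_zero, one_mul]

/-- Momentum-space multiplier of `E_p + Y^{-1/2} O_p`. -/
def mB (h : ℝ) (p : ℝ) : ℂ := chiE p + phase h (-(1/2)) p * chiO p

/-- Inverse multiplier of `mB`. -/
def mB' (h : ℝ) (p : ℝ) : ℂ := chiE p + phase h (1/2) p * chiO p

lemma measurable_mB (h : ℝ) : Measurable (mB h) :=
  measurable_chiE.add ((measurable_phase h (-(1/2))).mul measurable_chiO)

lemma measurable_mB' (h : ℝ) : Measurable (mB' h) :=
  measurable_chiE.add ((measurable_phase h (1/2)).mul measurable_chiO)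

lemma norm_mB (h : ℝ) (p : ℝ) : ‖mB h p‖ = 1 := by
  unfold mB chiE chiO
  by_cases he : Even ⌊p⌋
  · rw [if_pos he, if_neg (Int.not_odd_iff_even.mpr he)]
    simp
  · rw [if_neg he, if_pos (Int.not_even_iff_odd.mp he), zero_add, mul_one]
    exact norm_phase h _ p

lemma norm_mB' (h : ℝ) (p : ℝ) : ‖mB' h p‖ = 1 := by
  unfold mB' chiE chiO
  by_cases he : Even ⌊p⌋
  · rw [if_pos he, if_neg (Int.not_odd_iff_even.mpr he)]
    simp
  · rw [if_neg he, if_pos (Int.not_even_iff_odd.mp he), zero_add, mul_one]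
    exact norm_phase h _ p

lemma mB_mul_mB' (h : ℝ) (p : ℝ) (c : ℂ) : mB h p * (mB' h p * c) = c := by
  unfold mB mB' chiE chiO
  by_cases he : Even ⌊p⌋
  · rw [if_pos he, if_neg (Int.not_odd_iff_even.mpr he)]
    simp
  · rw [if_neg he, if_pos (Int.not_even_iff_odd.mp he)]
    simp only [zero_add, mul_one]
    unfold phase
    rw [← mul_assoc, ← Complex.exp_add,
      show Complex.I * (p : ℂ) * ((-(1/2) : ℝ) : ℂ) / (h : ℂ)
          + Complex.I * (p : ℂ) * (((1/2) : ℝ) : ℂ) / (h : ℂ) = 0 by push_cast; ring,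
      Complex.exp_zero, one_mul]

/-! ### The Fourier transform intertwines translation with multiplication by a phase -/

lemma fourierFormula_congr {h : ℝ} {f g : ℝ → ℂ} (hfg : f =ᵐ[volume] g) :
    fourierFormula h f = fourierFormula h g := by
  funext p
  unfold fourierFormula
  congr 1
  exact integral_congr_ae (by filter_upwards [hfg] with x hx; rw [hx])

lemma fourierFormula_translate (h s : ℝ) (f : ℝ → ℂ) (p : ℝ) :
    fourierFormula h (fun x => f (x + s)) p = phase h s p * fourierFormula h f p := by
  unfold fourierFormula phase
  set E : ℝ → ℂ := fun x =>
    Complex.exp (Complex.I * (p : ℂ) * (s : ℂ) / (h : ℂ)) *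
      (Complex.exp (-(Complex.I * (p : ℂ) * (x : ℂ) / (h : ℂ))) * f x) with hE
  have h1 : ∀ x : ℝ,
      Complex.exp (-(Complex.I * (p : ℂ) * (x : ℂ) / (h : ℂ))) * f (x + s) = E (x + s) := by
    intro x
    rw [hE]
    simp only
    rw [← mul_assoc, ← Complex.exp_add]
    congr 2
    push_cast
    ring
  have h2 : (∫ x : ℝ, Complex.exp (-(Complex.I * (p : ℂ) * (x : ℂ) / (h : ℂ))) * f (x + s))
      = ∫ x : ℝ, E (x + s) := by
    congr 1
    funext x
    exact h1 x
  rw [h2, integral_add_right_eq_self E s, hE]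
  rw [MeasureTheory.integral_const_mul]
  ring

lemma fourier_translate (hbar : ℝ) (𝓕 : HL2 ≃ₗᵢ[ℂ] HL2)
    (h𝓕 : ∀ f : HL2, Integrable (⇑f) volume → ⇑(𝓕 f) =ᵐ[volume] fourierFormula hbar (⇑f))
    (Ys : HL2 →L[ℂ] HL2) (s : ℝ)
    (hY : ∀ f : HL2, ⇑(Ys f) =ᵐ[volume] fun x => f (x + s)) (g : HL2) :
    ⇑(𝓕 (Ys g)) =ᵐ[volume] fun p => phase hbar s p * (𝓕 g) p := by
  have main : ∀ g : HL2, Integrable (⇑g) volume →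
      𝓕 (Ys g) = mulLI (measurable_phase hbar s) (norm_phase hbar s) (𝓕 g) := by
    intro g hg
    have hYg := hY g
    have hint : Integrable (⇑(Ys g)) volume := (hg.comp_add_right s).congr hYg.symm
    have e1 := h𝓕 (Ys g) hint
    have e2 : fourierFormula hbar ⇑(Ys g) = fourierFormula hbar (fun x => ⇑g (x + s)) :=
      fourierFormula_congr hYg
    have key : ⇑(𝓕 (Ys g)) =ᵐ[volume] fun p => phase hbar s p * ⇑(𝓕 g) p := by
      filter_upwards [e1, h𝓕 g hg] with p hp1 hp2
      rw [hp1, e2, fourierFormula_translate hbar s (⇑g) p, ← hp2]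
    exact Lp.ext (key.trans (coeFn_mulLI _ _ _).symm)
  have key : ∀ g : HL2,
      𝓕 (Ys g) = mulLI (measurable_phase hbar s) (norm_phase hbar s) (𝓕 g) := by
    refine Lp.induction ENNReal.ofNat_ne_top
      (fun g : HL2 => 𝓕 (Ys g) = mulLI (measurable_phase hbar s) (norm_phase hbar s) (𝓕 g))
      ?_ ?_ ?_
    · intro c t ht hμt
      refine main _ ?_
      have hcoe : ⇑((Lp.simpleFunc.indicatorConst 2 ht hμt.ne c : Lp.simpleFunc ℂ 2 volume) :
          HL2) =ᵐ[volume] t.indicator fun _ => c :=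
        indicatorConstLp_coeFn (hs := ht) (hμs := hμt.ne) (c := c)
      refine Integrable.congr ?_ hcoe.symm
      rw [integrable_indicator_iff ht]
      exact (integrableOn_const_iff).mpr (Or.inr hμt)
    · intro u v hu hv _ h1 h2
      rw [map_add, map_add, h1, h2, map_add, map_add]
    · exact isClosed_eq (𝓕.continuous.comp Ys.continuous)
        ((mulLI (measurable_phase hbar s) (norm_phase hbar s)).continuous.comp 𝓕.continuous)
  rw [key g]
  exact coeFn_mulLI _ _ _

end BakerAux

open BakerAux

/-- The baker's map propagator `F = S (L + X^{−1} R)(E_p + Y^{−1/2} O_p)` is a unitary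
operator on `L²(ℝ)`: it agrees with a linear isometric equivalence of `L²(ℝ)`. -/
theorem bakerPropagator_unitary (hbar : ℝ) (hhb : 0 < hbar)
    (𝓕 : HL2 ≃ₗᵢ[ℂ] HL2)
    (h𝓕 : ∀ f : HL2, Integrable (⇑f) volume → ⇑(𝓕 f) =ᵐ[volume] fourierFormula hbar (⇑f))
    (L R Ep Op S : HL2 →L[ℂ] HL2) (X Y : ℝ → HL2 →L[ℂ] HL2)
    (hL : ∀ f : HL2, ⇑(L f) =ᵐ[volume] fun x => chiL x * f x)
    (hR : ∀ f : HL2, ⇑(R f) =ᵐ[volume] fun x => chiR x * f x)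
    (hEp : ∀ f : HL2, ⇑(𝓕 (Ep f)) =ᵐ[volume] fun p => chiE p * (𝓕 f) p)
    (hOp : ∀ f : HL2, ⇑(𝓕 (Op f)) =ᵐ[volume] fun p => chiO p * (𝓕 f) p)
    (hX : ∀ s : ℝ, ∀ f : HL2,
      ⇑(X s f) =ᵐ[volume] fun x => Complex.exp (Complex.I * s * x / hbar) * f x)
    (hY : ∀ s : ℝ, ∀ f : HL2, ⇑(Y s f) =ᵐ[volume] fun x => f (x + s))
    (hS : ∀ f : HL2, ⇑(S f) =ᵐ[volume] fun x => ((Real.sqrt 2 : ℝ) : ℂ)⁻¹ * f (x / 2)) :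
    ∃ e : HL2 ≃ₗᵢ[ℂ] HL2,
      ∀ f : HL2, e f = (S ∘L (L + X (-1) ∘L R) ∘L (Ep + Y (-(1/2)) ∘L Op)) f := by
  classical
  -- the two multiplication-type factors
  have hAcoe : ∀ f : HL2,
      ⇑((L + X (-1) ∘L R) f) =ᵐ[volume] fun x => mA hbar x * f x := by
    intro f
    have h0 : (L + X (-1) ∘L R) f = L f + X (-1) (R f) := rfl
    rw [h0]
    filter_upwards [Lp.coeFn_add (L f) (X (-1) (R f)), hL f, hX (-1) (R f), hR f]
      with x ha hl hx hr
    simp only [Pi.add_apply] at ha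
    rw [ha, hl, hx, hr]
    unfold mA
    ring
  have hBcoe : ∀ f : HL2,
      ⇑(𝓕 ((Ep + Y (-(1/2)) ∘L Op) f)) =ᵐ[volume] fun p => mB hbar p * (𝓕 f) p := by
    intro f
    have h0 : (Ep + Y (-(1/2)) ∘L Op) f = Ep f + Y (-(1/2)) (Op f) := rfl
    rw [h0, map_add]
    filter_upwards [Lp.coeFn_add (𝓕 (Ep f)) (𝓕 (Y (-(1/2)) (Op f))), hEp f,
      fourier_translate hbar 𝓕 h𝓕 (Y (-(1/2))) (-(1/2)) (hY (-(1/2))) (Op f), hOp f]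
      with p ha he ht ho
    simp only [Pi.add_apply] at ha
    rw [ha, he, ht, ho]
    unfold mB
    ring
  -- norms
  have hAnorm : ∀ f : HL2, ‖(L + X (-1) ∘L R) f‖ = ‖f‖ := fun f =>
    norm_eq_of_ae_unit (norm_mA hbar) (hAcoe f)
  have hBnorm : ∀ f : HL2, ‖(Ep + Y (-(1/2)) ∘L Op) f‖ = ‖f‖ := by
    intro f
    rw [← 𝓕.norm_map ((Ep + Y (-(1/2)) ∘L Op) f), ← 𝓕.norm_map f]
    exact norm_eq_of_ae_unit (norm_mB hbar) (hBcoe f)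
  have hSnorm : ∀ f : HL2, ‖S f‖ = ‖f‖ := by
    intro f
    rw [Lp.norm_def, Lp.norm_def, eLpNorm_congr_ae (hS f)]
    congr 1
    have hrw : (fun x : ℝ => ((Real.sqrt 2 : ℝ) : ℂ)⁻¹ * ⇑f (x / 2))
        = ((Real.sqrt 2 : ℝ) : ℂ)⁻¹ • fun x : ℝ => ⇑f ((2:ℝ)⁻¹ * x) := by
      funext x
      simp only [Pi.smul_apply, smul_eq_mul]
      congr 2
      rw [div_eq_inv_mul]
    rw [hrw, eLpNorm_const_smul,
      eLpNorm2_comp_mul 2⁻¹ (by norm_num) _ (Lp.aestronglyMeasurable f), ← mul_assoc]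
    have hconst : ‖((Real.sqrt 2 : ℝ) : ℂ)⁻¹‖ₑ
        * ENNReal.ofReal |((2:ℝ)⁻¹)⁻¹| ^ ((1:ℝ)/2) = 1 := by
      have h1 : |((2:ℝ)⁻¹)⁻¹| = (2:ℝ) := by norm_num
      have h2 : ENNReal.ofReal (2:ℝ) ^ ((1:ℝ)/2) = ENNReal.ofReal (Real.sqrt 2) := by
        rw [ENNReal.ofReal_rpow_of_pos (by norm_num), ← Real.sqrt_eq_rpow]
      have h3 : ‖((Real.sqrt 2 : ℝ) : ℂ)⁻¹‖ₑ
          = ENNReal.ofReal (Real.sqrt 2)⁻¹ := by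
        rw [← ofReal_norm]
        congr 1
        rw [norm_inv, Complex.norm_real, Real.norm_eq_abs,
          abs_of_nonneg (Real.sqrt_nonneg 2)]
      rw [h1, h2, h3, ← ENNReal.ofReal_mul (by positivity),
        inv_mul_cancel₀ (by positivity : Real.sqrt 2 ≠ 0)]
      exact ENNReal.ofReal_one
    rw [hconst, one_mul]
  -- surjectivity
  have hAsurj : Function.Surjective (L + X (-1) ∘L R) :=
    surj_of_mul_inverse (measurable_mA' hbar) (norm_mA' hbar) hAcoe (mA_mul_mA' hbar)
  have hBsurj : Function.Surjective (Ep + Y (-(1/2)) ∘L Op) := by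
    intro g
    set u : HL2 := (memL2_mul (measurable_mB' hbar) (norm_mB' hbar) (𝓕 g)).toLp _ with hu
    refine ⟨𝓕.symm u, 𝓕.injective (Lp.ext ?_)⟩
    have h1 := hBcoe (𝓕.symm u)
    rw [LinearIsometryEquiv.apply_symm_apply] at h1
    filter_upwards [h1, MemLp.coeFn_toLp (memL2_mul (measurable_mB' hbar) (norm_mB' hbar) (𝓕 g))]
      with p hp hcp
    rw [hp]
    show mB hbar p * ⇑u p = ⇑(𝓕 g) p
    rw [hu]
    rw [hcp]
    exact mB_mul_mB' hbar p _
  have hSsurj : Function.Surjective S := by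
    intro g
    have hq2 : Measure.QuasiMeasurePreserving (fun x : ℝ => 2 * x) volume volume := by
      refine ⟨measurable_const_mul 2, ?_⟩
      rw [Real.map_volume_mul_left (two_ne_zero)]
      exact Measure.smul_absolutelyContinuous
    have hqhalf : Measure.QuasiMeasurePreserving (fun x : ℝ => x / 2) volume volume := by
      have : (fun x : ℝ => x / 2) = fun x : ℝ => (2:ℝ)⁻¹ * x := by
        funext x; rw [div_eq_inv_mul]
      rw [this]
      refine ⟨measurable_const_mul _, ?_⟩
      rw [Real.map_volume_mul_left (by norm_num : ((2:ℝ)⁻¹ ≠ 0))]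
      exact Measure.smul_absolutelyContinuous
    have hsm : AEStronglyMeasurable (fun x : ℝ => ⇑g (2 * x)) volume :=
      (Lp.aestronglyMeasurable g).comp_quasiMeasurePreserving hq2
    have hmem : MemLp (fun x : ℝ => ((Real.sqrt 2 : ℝ) : ℂ) * ⇑g (2 * x)) 2 volume := by
      refine MemLp.const_mul ⟨hsm, ?_⟩ _
      rw [show (fun x : ℝ => ⇑g (2 * x)) = fun x : ℝ => ⇑g ((2:ℝ) * x) from rfl,
        eLpNorm2_comp_mul 2 two_ne_zero _ (Lp.aestronglyMeasurable g)]
      exact ENNReal.mul_lt_top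
        (ENNReal.rpow_lt_top_of_nonneg (by norm_num) ENNReal.ofReal_ne_top)
        (Lp.eLpNorm_lt_top g)
    refine ⟨hmem.toLp _, Lp.ext ?_⟩
    have hcomp := hqhalf.ae_eq_comp (MemLp.coeFn_toLp hmem)
    filter_upwards [hS (hmem.toLp _), hcomp] with x h1 h2
    rw [h1]
    have h2' : ⇑(hmem.toLp _) (x / 2) = ((Real.sqrt 2 : ℝ) : ℂ) * ⇑g (2 * (x / 2)) := h2
    rw [h2', show (2 : ℝ) * (x / 2) = x by ring, ← mul_assoc,
      inv_mul_cancel₀ (Complex.ofReal_ne_zero.mpr (ne_of_gt (Real.sqrt_pos.mpr (by norm_num)))), one_mul]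
  -- assemble
  set F : HL2 →L[ℂ] HL2 := S ∘L (L + X (-1) ∘L R) ∘L (Ep + Y (-(1/2)) ∘L Op) with hF
  have hFapp : ∀ f : HL2,
      F f = S ((L + X (-1) ∘L R) ((Ep + Y (-(1/2)) ∘L Op) f)) := fun f => rfl
  have hFnorm : ∀ f : HL2, ‖F f‖ = ‖f‖ := by
    intro f
    rw [hFapp, hSnorm, hAnorm, hBnorm]
  have hFsurj : Function.Surjective F := by
    intro g
    obtain ⟨g1, hg1⟩ := hSsurj g
    obtain ⟨g2, hg2⟩ := hAsurj g1
    obtain ⟨g3, hg3⟩ := hBsurj g2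
    exact ⟨g3, by rw [hFapp, hg3, hg2, hg1]⟩
  let FI : HL2 →ₗᵢ[ℂ] HL2 := ⟨F.toLinearMap, hFnorm⟩
  have hFIsurj : Function.Surjective FI := hFsurj
  refine ⟨LinearIsometryEquiv.ofSurjective FI hFIsurj, fun f => ?_⟩
  have hcoe := LinearIsometryEquiv.coe_ofSurjective FI hFIsurj
  exact congrFun hcoe f

end
end

section
/- Coherent-state expectation of quantized harmonics in the classical limit: for every (x₀,p₀) ∈ ℝ² and all integers a, b, the inner product ⟪φ_ħ^{x₀,p₀}, W_{a,b} φ_ħ^{x₀,p₀}⟫ converges to e^{2πi(a x₀ + b p₀)} as ħ → 0⁺. -/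
open MeasureTheory Filter Topology

noncomputable section

/-- The coherent state `φ_ħ^{x₀,p₀}(x) = (πħ)^{−1/4} e^{−(x−x₀)²/(2ħ)} e^{i p₀ x/ħ − i p₀ x₀/(2ħ)}`. -/
def coherent (hbar x₀ p₀ : ℝ) (x : ℝ) : ℂ :=
  (((Real.pi * hbar) ^ (-(1/4 : ℝ)) : ℝ) : ℂ) *
    Complex.exp (-(((x - x₀) ^ 2 / (2 * hbar) : ℝ) : ℂ)) *
    Complex.exp (Complex.I * ((p₀ * x / hbar : ℝ) : ℂ)
      - Complex.I * ((p₀ * x₀ / (2 * hbar) : ℝ) : ℂ))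

lemma coherent_eq (hbar x₀ p₀ x : ℝ) :
    coherent hbar x₀ p₀ x = (((Real.pi * hbar) ^ (-(1/4 : ℝ)) : ℝ) : ℂ) *
      Complex.exp (-(((x - x₀) ^ 2 / (2 * hbar) : ℝ) : ℂ) +
        (Complex.I * ((p₀ * x / hbar : ℝ) : ℂ)
          - Complex.I * ((p₀ * x₀ / (2 * hbar) : ℝ) : ℂ))) := by
  rw [coherent, Complex.exp_add, mul_assoc]

lemma coherent_key (hbar : ℝ) (hh : 0 < hbar) (x₀ p₀ : ℝ) (a b : ℤ) :
    (∫ x : ℝ, (starRingEnd ℂ) (coherent hbar x₀ p₀ x) *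
      (Complex.exp (2 * Real.pi * Complex.I * (a : ℂ) * (x : ℂ)) *
        coherent hbar x₀ p₀ (x + 2 * Real.pi * hbar * b))) =
    Complex.exp (2 * Real.pi * Complex.I * ((a : ℂ) * (x₀ : ℂ) + (b : ℂ) * (p₀ : ℂ))
      - (Real.pi : ℂ)^2 * (hbar : ℂ) * ((a:ℂ)^2 + (b:ℂ)^2 + 2*Complex.I*(a:ℂ)*(b:ℂ))) := by
  have hne : hbar ≠ 0 := ne_of_gt hh
  have hcne : (hbar : ℂ) ≠ 0 := Complex.ofReal_ne_zero.mpr hne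
  set s : ℝ := 2 * Real.pi * hbar * b with hs
  set A : ℝ := (Real.pi * hbar) ^ (-(1/4 : ℝ)) with hA
  set B : ℂ := ((-hbar⁻¹ : ℝ) : ℂ) with hB
  set C : ℂ := (((2*x₀ - s)/hbar : ℝ) : ℂ) + 2 * Real.pi * Complex.I * (a:ℂ) with hC
  set D : ℂ := -(((x₀^2 + (s - x₀)^2)/(2*hbar) : ℝ) : ℂ) + Complex.I * ((p₀ * s / hbar : ℝ) : ℂ)
    with hD
  have hpt : ∀ x : ℝ, (starRingEnd ℂ) (coherent hbar x₀ p₀ x) *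
      (Complex.exp (2 * Real.pi * Complex.I * (a : ℂ) * (x : ℂ)) *
        coherent hbar x₀ p₀ (x + s)) =
      ((A : ℂ))^2 * Complex.exp (B * (x:ℂ)^2 + C * (x:ℂ) + D) := by
    intro x
    rw [coherent_eq, coherent_eq, map_mul, ← Complex.exp_conj]
    simp only [map_add, map_sub, map_neg, map_mul, Complex.conj_ofReal, Complex.conj_I]
    rw [show ∀ (u v w : ℂ) (c : ℂ), c * Complex.exp u * (Complex.exp v * (c * Complex.exp w)) =
        c^2 * Complex.exp (u + v + w) from by
      intro u v w c; rw [Complex.exp_add, Complex.exp_add]; ring]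
    congr 1
    congr 1
    rw [hB, hC, hD, hs]
    push_cast
    field_simp [hcne]
    ring_nf
  simp_rw [hpt]
  rw [MeasureTheory.integral_const_mul]
  have hBre : B.re < 0 := by
    rw [hB, Complex.ofReal_re]
    simp [hh, inv_pos]
  rw [integral_cexp_quadratic hBre]
  have hπB : (Real.pi : ℂ) / (-B) = ((Real.pi * hbar : ℝ) : ℂ) := by
    rw [hB]
    push_cast
    field_simp
  rw [hπB]
  have hcp : ((Real.pi * hbar : ℝ) : ℂ) ^ (1/2 : ℂ) = (((Real.pi * hbar) ^ (1/2 : ℝ) : ℝ) : ℂ) := by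
    rw [show (1/2 : ℂ) = ((1/2 : ℝ) : ℂ) by norm_num, ← Complex.ofReal_cpow (by positivity)]
  rw [hcp]
  have hApos : (0:ℝ) < Real.pi * hbar := by positivity
  have hAmul : ((A : ℂ))^2 * (((Real.pi * hbar) ^ (1/2 : ℝ) : ℝ) : ℂ) = 1 := by
    rw [hA, ← Complex.ofReal_pow, ← Complex.ofReal_mul, ← Real.rpow_natCast _ 2,
      ← Real.rpow_mul hApos.le, ← Real.rpow_add hApos]
    norm_num
  rw [← mul_assoc, hAmul, one_mul]
  congr 1
  rw [hD, hC, hB, hs]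
  push_cast
  field_simp [hcne]
  ring_nf
  simp only [Complex.I_sq]
  ring_nf

/-- Coherent-state expectation of quantized harmonics in the classical limit:
`⟪φ_ħ^{x₀,p₀}, W_{a,b} φ_ħ^{x₀,p₀}⟫ → e^{2πi(a x₀ + b p₀)}` as `ħ → 0⁺`, where
`(W_{a,b} f)(x) = e^{2πiax} f(x + 2πħb)`. -/
theorem coherent_harmonic_expectation_classical_limit
    (φ : ℝ → ℝ → ℝ → HL2)
    (hφ : ∀ hbar : ℝ, 0 < hbar → ∀ x₀ p₀ : ℝ,
      ⇑(φ hbar x₀ p₀) =ᵐ[volume] coherent hbar x₀ p₀)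
    (W : ℝ → ℤ → ℤ → HL2 →L[ℂ] HL2)
    (hW : ∀ hbar : ℝ, 0 < hbar → ∀ a b : ℤ, ∀ f : HL2,
      ⇑(W hbar a b f) =ᵐ[volume] fun x =>
        Complex.exp (2 * Real.pi * Complex.I * (a : ℂ) * (x : ℂ)) *
          f (x + 2 * Real.pi * hbar * b))
    (x₀ p₀ : ℝ) (a b : ℤ) :
    Tendsto (fun hbar : ℝ => (inner ℂ (φ hbar x₀ p₀) (W hbar a b (φ hbar x₀ p₀)) : ℂ))
      (𝓝[>] (0 : ℝ))
      (𝓝 (Complex.exp (2 * Real.pi * Complex.I * ((a : ℂ) * (x₀ : ℂ) + (b : ℂ) * (p₀ : ℂ))))) := by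
  have heq : ∀ hbar : ℝ, 0 < hbar →
      (inner ℂ (φ hbar x₀ p₀) (W hbar a b (φ hbar x₀ p₀)) : ℂ) =
      Complex.exp (2 * Real.pi * Complex.I * ((a : ℂ) * (x₀ : ℂ) + (b : ℂ) * (p₀ : ℂ))
        - (Real.pi : ℂ)^2 * (hbar : ℂ) *
          ((a:ℂ)^2 + (b:ℂ)^2 + 2*Complex.I*(a:ℂ)*(b:ℂ))) := by
    intro hbar hh
    rw [MeasureTheory.L2.inner_def, ← coherent_key hbar hh x₀ p₀ a b]
    refine integral_congr_ae ?_
    have h1 := hφ hbar hh x₀ p₀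
    have h2 := hW hbar hh a b (φ hbar x₀ p₀)
    have h3 : (fun x : ℝ => (φ hbar x₀ p₀ : ℝ → ℂ) (x + 2 * Real.pi * hbar * b))
        =ᵐ[volume] (fun x : ℝ => coherent hbar x₀ p₀ (x + 2 * Real.pi * hbar * b)) :=
      (measurePreserving_add_right volume
        (2 * Real.pi * hbar * b)).quasiMeasurePreserving.ae_eq_comp h1
    filter_upwards [h1, h2, h3] with x hx1 hx2 hx3
    rw [RCLike.inner_apply, hx1, hx2, hx3, mul_comm]
  have hev : (fun hbar : ℝ => (inner ℂ (φ hbar x₀ p₀) (W hbar a b (φ hbar x₀ p₀)) : ℂ))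
      =ᶠ[𝓝[>] (0:ℝ)] fun hbar : ℝ =>
      Complex.exp (2 * Real.pi * Complex.I * ((a : ℂ) * (x₀ : ℂ) + (b : ℂ) * (p₀ : ℂ))
        - (Real.pi : ℂ)^2 * (hbar : ℂ) *
          ((a:ℂ)^2 + (b:ℂ)^2 + 2*Complex.I*(a:ℂ)*(b:ℂ))) := by
    filter_upwards [self_mem_nhdsWithin] with hbar hh
    exact heq hbar hh
  refine Tendsto.congr' hev.symm ?_
  have hc : Continuous (fun hbar : ℝ =>
      Complex.exp (2 * Real.pi * Complex.I * ((a : ℂ) * (x₀ : ℂ) + (b : ℂ) * (p₀ : ℂ))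
        - (Real.pi : ℂ)^2 * (hbar : ℂ) *
          ((a:ℂ)^2 + (b:ℂ)^2 + 2*Complex.I*(a:ℂ)*(b:ℂ)))) := by
    fun_prop
  have := (hc.tendsto 0).mono_left (nhdsWithin_le_nhds (s := Set.Ioi (0:ℝ)))
  simpa using this

end
end

section
/- Localization of coherent states under the projection L: let L be multiplication by the indicator χ_l of ⋃_{k∈ℤ}[k,k+1/2). For (x₀,p₀) ∈ ℝ², if fract(x₀) ∈ (0,1/2) then ‖L φ_ħ^{x₀,p₀}‖² → 1 as ħ → 0⁺, while if fract(x₀) ∈ (1/2,1) then ‖L φ_ħ^{x₀,p₀}‖² → 0 as ħ → 0⁺. -/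
open MeasureTheory Filter Topology

noncomputable section

def gauss (h x₀ : ℝ) (x : ℝ) : ℝ := (Real.pi * h) ^ (-(1/2 : ℝ)) * Real.exp (-(x - x₀)^2 / h)

lemma gauss_nonneg {h : ℝ} (hh : 0 ≤ h) (x₀ x : ℝ) : 0 ≤ gauss h x₀ x := by
  unfold gauss
  have := Real.pi_pos
  positivity

lemma gauss_integrable {h : ℝ} (hh : 0 < h) (x₀ : ℝ) : Integrable (gauss h x₀) := by
  unfold gauss
  apply Integrable.const_mul
  have : Integrable (fun x : ℝ => Real.exp (-(1/h) * x ^ 2)) :=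
    integrable_exp_neg_mul_sq (by positivity)
  have := this.comp_sub_right x₀
  refine this.congr (Eventually.of_forall fun x => ?_)
  ring_nf

lemma gauss_integral {h : ℝ} (hh : 0 < h) (x₀ : ℝ) : ∫ x, gauss h x₀ x = 1 := by
  unfold gauss
  rw [integral_const_mul]
  have h1 : (∫ x : ℝ, Real.exp (-(x - x₀)^2 / h)) = ∫ x : ℝ, Real.exp (-(1/h) * x ^ 2) := by
    rw [← integral_sub_right_eq_self (fun x => Real.exp (-(1/h) * x ^ 2)) x₀]
    congr 1; ext x; ring_nf
  rw [h1, integral_gaussian]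
  have hπh : 0 < Real.pi * h := by positivity
  rw [show Real.pi / (1/h) = Real.pi * h by field_simp]
  rw [Real.sqrt_eq_rpow, ← Real.rpow_add hπh]
  norm_num

lemma gauss_tail_le {h δ : ℝ} (hh : 0 < h) (hδ : 0 < δ) (x₀ : ℝ) :
    ∫ x in {x : ℝ | δ ≤ |x - x₀|}, gauss h x₀ x
      ≤ Real.sqrt 2 * Real.exp (-δ^2 / (2*h)) := by
  have hπh : (0:ℝ) < Real.pi * h := by positivity
  set c : ℝ := (Real.pi * h) ^ (-(1/2 : ℝ)) with hc
  have hcpos : 0 < c := Real.rpow_pos_of_pos hπh _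
  set bound : ℝ → ℝ := fun x =>
    c * (Real.exp (-δ^2 / (2*h)) * Real.exp (-(x - x₀)^2 / (2*h))) with hbd
  have hint2 : Integrable (fun x : ℝ => Real.exp (-(x - x₀)^2 / (2*h))) := by
    have : Integrable (fun x : ℝ => Real.exp (-(1/(2*h)) * x ^ 2)) :=
      integrable_exp_neg_mul_sq (by positivity)
    refine (this.comp_sub_right x₀).congr (Eventually.of_forall fun x => ?_)
    ring_nf
  have hbint : Integrable bound := (hint2.const_mul _).const_mul _
  have hle : ∀ x ∈ {x : ℝ | δ ≤ |x - x₀|}, gauss h x₀ x ≤ bound x := by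
    intro x hx
    have h1 : δ^2 ≤ (x - x₀)^2 := by
      rw [← sq_abs (x - x₀)]
      exact pow_le_pow_left₀ hδ.le hx 2
    have : Real.exp (-(x - x₀)^2 / h)
        ≤ Real.exp (-δ^2 / (2*h)) * Real.exp (-(x - x₀)^2 / (2*h)) := by
      rw [← Real.exp_add]
      apply Real.exp_le_exp.mpr
      rw [div_add_div _ _ (by positivity : (2*h) ≠ 0) (by positivity : (2*h) ≠ 0)]
      rw [div_le_div_iff₀ hh (by positivity)]
      nlinarith
    calc gauss h x₀ x = c * Real.exp (-(x - x₀)^2 / h) := rfl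
      _ ≤ bound x := by
          exact mul_le_mul_of_nonneg_left this hcpos.le
  have step1 : ∫ x in {x : ℝ | δ ≤ |x - x₀|}, gauss h x₀ x
      ≤ ∫ x in {x : ℝ | δ ≤ |x - x₀|}, bound x := by
    apply setIntegral_mono_on ((gauss_integrable hh x₀).integrableOn)
      hbint.integrableOn
    · exact measurableSet_le measurable_const ((measurable_id.sub_const x₀).abs)
    · exact hle
  have step2 : ∫ x in {x : ℝ | δ ≤ |x - x₀|}, bound x ≤ ∫ x, bound x := by
    apply setIntegral_le_integral hbint
    filter_upwards with x
    have : (0:ℝ) ≤ bound x := by unfold bound; positivity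
    exact this
  have step3 : ∫ x, bound x = Real.sqrt 2 * Real.exp (-δ^2 / (2*h)) := by
    unfold bound
    rw [integral_const_mul, integral_const_mul]
    have h1 : (∫ x : ℝ, Real.exp (-(x - x₀)^2 / (2*h)))
        = ∫ x : ℝ, Real.exp (-(1/(2*h)) * x ^ 2) := by
      rw [← integral_sub_right_eq_self (fun x => Real.exp (-(1/(2*h)) * x ^ 2)) x₀]
      congr 1; ext x; ring_nf
    rw [h1, integral_gaussian]
    have : Real.pi / (1/(2*h)) = 2 * (Real.pi * h) := by field_simp
    rw [this, Real.sqrt_mul (by norm_num : (0:ℝ) ≤ 2), Real.sqrt_eq_rpow (Real.pi * h)]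
    have key : (Real.pi*h) ^ (-(1/2:ℝ)) * (Real.pi*h) ^ ((1:ℝ)/2) = 1 := by
      rw [← Real.rpow_add hπh]; norm_num
    linear_combination (Real.exp (-δ^2/(2*h)) * Real.sqrt 2) * key
  linarith

lemma tail_tendsto {δ : ℝ} (hδ : 0 < δ) :
    Tendsto (fun h : ℝ => Real.sqrt 2 * Real.exp (-δ^2 / (2*h))) (𝓝[>] (0:ℝ)) (𝓝 0) := by
  have h1 : Tendsto (fun h : ℝ => -δ^2 / (2*h)) (𝓝[>] (0:ℝ)) atBot := by
    have h2 : Tendsto (fun h : ℝ => h⁻¹) (𝓝[>] (0:ℝ)) atTop := tendsto_inv_nhdsGT_zero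
    have h3 : Tendsto (fun h : ℝ => (-δ^2/2) * h⁻¹) (𝓝[>] (0:ℝ)) atBot := by
      apply Tendsto.const_mul_atTop_of_neg (by nlinarith : (-δ^2/2) < 0) h2
    refine h3.congr fun h => by field_simp
  have := (Real.tendsto_exp_atBot).comp h1
  have h4 : Tendsto (fun h : ℝ => Real.sqrt 2 * Real.exp (-δ^2 / (2*h))) (𝓝[>] (0:ℝ))
      (𝓝 (Real.sqrt 2 * 0)) := this.const_mul _
  simpa using h4

lemma setintegral_gauss_tendsto_zero {δ : ℝ} (hδ : 0 < δ) (x₀ : ℝ) (S : Set ℝ)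
    (hsub : S ⊆ {x : ℝ | δ ≤ |x - x₀|}) :
    Tendsto (fun h : ℝ => ∫ x in S, gauss h x₀ x) (𝓝[>] (0:ℝ)) (𝓝 0) := by
  apply squeeze_zero' (g := fun h : ℝ => Real.sqrt 2 * Real.exp (-δ^2 / (2*h)))
  · filter_upwards [self_mem_nhdsWithin] with h hh
    exact integral_nonneg (gauss_nonneg (le_of_lt hh) x₀)
  · filter_upwards [self_mem_nhdsWithin] with h hh
    calc ∫ x in S, gauss h x₀ x ≤ ∫ x in {x : ℝ | δ ≤ |x - x₀|}, gauss h x₀ x := by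
          apply setIntegral_mono_set ((gauss_integrable hh x₀).integrableOn)
          · filter_upwards with x using gauss_nonneg (le_of_lt hh) x₀ x
          · exact HasSubset.Subset.eventuallyLE hsub
      _ ≤ Real.sqrt 2 * Real.exp (-δ^2 / (2*h)) := gauss_tail_le hh hδ x₀
  · exact tail_tendsto hδ

lemma setintegral_gauss_tendsto_one {δ : ℝ} (hδ : 0 < δ) (x₀ : ℝ) (S : Set ℝ)
    (hS : MeasurableSet S) (hsub : Sᶜ ⊆ {x : ℝ | δ ≤ |x - x₀|}) :
    Tendsto (fun h : ℝ => ∫ x in S, gauss h x₀ x) (𝓝[>] (0:ℝ)) (𝓝 1) := by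
  have h0 := setintegral_gauss_tendsto_zero hδ x₀ Sᶜ hsub
  have heq : ∀ᶠ h : ℝ in 𝓝[>] (0:ℝ),
      (1 : ℝ) - ∫ x in Sᶜ, gauss h x₀ x = ∫ x in S, gauss h x₀ x := by
    filter_upwards [self_mem_nhdsWithin] with h hh
    have := integral_add_compl hS (gauss_integrable hh x₀)
    rw [gauss_integral hh x₀] at this
    linarith
  have : Tendsto (fun h : ℝ => (1:ℝ) - ∫ x in Sᶜ, gauss h x₀ x) (𝓝[>] (0:ℝ)) (𝓝 (1 - 0)) :=
    tendsto_const_nhds.sub h0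
  simpa using this.congr' heq

lemma norm_coherent {h : ℝ} (hh : 0 < h) (x₀ p₀ x : ℝ) :
    ‖coherent h x₀ p₀ x‖^2 = gauss h x₀ x := by
  have hπh : (0:ℝ) < Real.pi * h := by positivity
  have hr : (0:ℝ) < (Real.pi * h) ^ (-(1/4 : ℝ)) := Real.rpow_pos_of_pos hπh _
  unfold coherent gauss
  rw [norm_mul, norm_mul, Complex.norm_real]
  simp only [Complex.norm_exp]
  simp only [Complex.sub_re, Complex.mul_re, Complex.I_re, Complex.I_im, Complex.ofReal_re,
    Complex.ofReal_im, Complex.neg_re, zero_mul, one_mul, mul_zero, sub_zero, zero_sub,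
    neg_neg, neg_zero, sub_self, Real.exp_zero, mul_one]
  rw [Real.norm_eq_abs, abs_of_pos hr, mul_pow, sq (Real.exp _), ← Real.exp_add]
  rw [← Real.rpow_natCast ((Real.pi * h) ^ (-(1/4 : ℝ))) 2, ← Real.rpow_mul hπh.le]
  norm_num
  congr 1
  field_simp
  ring
  simp


lemma lp_norm_sq (g : HL2) (f : ℝ → ℂ) (hg : ⇑g =ᵐ[volume] f) :
    ‖g‖^2 = ∫ x : ℝ, ‖f x‖^2 := by
  rw [norm_sq_eq_re_inner (𝕜 := ℂ) g, MeasureTheory.L2.inner_def,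
    ← integral_re (MeasureTheory.L2.integrable_inner g g)]
  apply integral_congr_ae
  filter_upwards [hg] with x hx
  rw [hx]
  exact (norm_sq_eq_re_inner (𝕜 := ℂ) (f x)).symm

lemma norm_L_sq {h : ℝ} (hh : 0 < h) (x₀ p₀ : ℝ)
    (φ : ℝ → ℝ → ℝ → HL2)
    (hφ : ∀ hbar : ℝ, 0 < hbar → ∀ x₀ p₀ : ℝ,
      ⇑(φ hbar x₀ p₀) =ᵐ[volume] coherent hbar x₀ p₀)
    (L : HL2 →L[ℂ] HL2)
    (hL : ∀ f : HL2, ⇑(L f) =ᵐ[volume] fun x => chiL x * f x) :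
    ‖L (φ h x₀ p₀)‖^2 = ∫ x in {x : ℝ | Int.fract x < 1/2}, gauss h x₀ x := by
  have hrep : ⇑(L (φ h x₀ p₀)) =ᵐ[volume] fun x => chiL x * coherent h x₀ p₀ x := by
    refine (hL _).trans ?_
    filter_upwards [hφ h hh x₀ p₀] with x hx
    rw [hx]
  rw [lp_norm_sq _ _ hrep]
  have hS : MeasurableSet {x : ℝ | Int.fract x < 1/2} :=
    measurableSet_lt measurable_fract measurable_const
  rw [← integral_indicator hS]
  apply integral_congr_ae
  filter_upwards with x
  rw [Set.indicator_apply]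
  simp only [Set.mem_setOf_eq]
  unfold chiL
  by_cases hx : Int.fract x < 1/2
  · rw [if_pos hx, if_pos hx, one_mul]
    exact norm_coherent hh x₀ p₀ x
  · rw [if_neg hx, if_neg hx, zero_mul, norm_zero]
    ring

/-- Localization of coherent states under the projection `L` (multiplication by the
indicator of `⋃ₖ [k, k+1/2)`): if `fract x₀ ∈ (0, 1/2)` then `‖L φ_ħ^{x₀,p₀}‖² → 1` and
if `fract x₀ ∈ (1/2, 1)` then `‖L φ_ħ^{x₀,p₀}‖² → 0`, as `ħ → 0⁺`. -/
theorem coherent_localization_L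
    (φ : ℝ → ℝ → ℝ → HL2)
    (hφ : ∀ hbar : ℝ, 0 < hbar → ∀ x₀ p₀ : ℝ,
      ⇑(φ hbar x₀ p₀) =ᵐ[volume] coherent hbar x₀ p₀)
    (L : HL2 →L[ℂ] HL2)
    (hL : ∀ f : HL2, ⇑(L f) =ᵐ[volume] fun x => chiL x * f x)
    (x₀ p₀ : ℝ) :
    (Int.fract x₀ ∈ Set.Ioo (0 : ℝ) (1/2) →
      Tendsto (fun hbar : ℝ => ‖L (φ hbar x₀ p₀)‖ ^ 2) (𝓝[>] (0 : ℝ)) (𝓝 1)) ∧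
    (Int.fract x₀ ∈ Set.Ioo (1/2 : ℝ) 1 →
      Tendsto (fun hbar : ℝ => ‖L (φ hbar x₀ p₀)‖ ^ 2) (𝓝[>] (0 : ℝ)) (𝓝 0)) := by
  constructor
  · intro hmem
    obtain ⟨h0, h1⟩ := hmem
    set f := Int.fract x₀ with hf
    set n := ⌊x₀⌋ with hn
    set δ : ℝ := min f (1/2 - f) with hδdef
    have hδ : 0 < δ := lt_min h0 (by linarith)
    have hsub : {x : ℝ | Int.fract x < 1/2}ᶜ ⊆ {x : ℝ | δ ≤ |x - x₀|} := by
      intro x hx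
      by_contra hcon
      simp only [Set.mem_setOf_eq, not_le] at hcon
      apply hx
      show Int.fract x < 1/2
      have hx1 : x₀ - δ < x := by have := abs_lt.mp hcon; linarith [this.1, this.2]
      have hx2 : x < x₀ + δ := by have := abs_lt.mp hcon; linarith [this.1, this.2]
      have hx0 : x₀ = n + f := by rw [hf, hn, ← Int.self_sub_floor]; ring
      have hfl : ⌊x⌋ = n := by
        rw [Int.floor_eq_iff]
        constructor
        · have : δ ≤ f := min_le_left _ _
          push_cast; linarith
        · have : δ ≤ 1/2 - f := min_le_right _ _
          push_cast; linarith
      have hd : δ ≤ 1/2 - f := min_le_right _ _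
      rw [← Int.self_sub_floor, hfl]; push_cast; linarith
    have key := setintegral_gauss_tendsto_one hδ x₀ _
      (measurableSet_lt measurable_fract measurable_const) hsub
    refine key.congr' ?_
    filter_upwards [self_mem_nhdsWithin] with h hh
    exact (norm_L_sq hh x₀ p₀ φ hφ L hL).symm
  · intro hmem
    obtain ⟨h0, h1⟩ := hmem
    set f := Int.fract x₀ with hf
    set n := ⌊x₀⌋ with hn
    set δ : ℝ := min (f - 1/2) (1 - f) with hδdef
    have hδ : 0 < δ := lt_min (by linarith) (by linarith)
    have hsub : {x : ℝ | Int.fract x < 1/2} ⊆ {x : ℝ | δ ≤ |x - x₀|} := by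
      intro x hx
      by_contra hcon
      simp only [Set.mem_setOf_eq, not_le] at hcon
      have hx1 : x₀ - δ < x := by have := abs_lt.mp hcon; linarith [this.1, this.2]
      have hx2 : x < x₀ + δ := by have := abs_lt.mp hcon; linarith [this.1, this.2]
      have hx0 : x₀ = n + f := by rw [hf, hn, ← Int.self_sub_floor]; ring
      have hfl : ⌊x⌋ = n := by
        rw [Int.floor_eq_iff]
        constructor
        · have hd1 : δ ≤ f - 1/2 := min_le_left _ _
          push_cast; linarith
        · have hd2 : δ ≤ 1 - f := min_le_right _ _
          push_cast; linarith
      have hxS : Int.fract x < 1/2 := hx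
      have hd1 : δ ≤ f - 1/2 := min_le_left _ _
      rw [← Int.self_sub_floor, hfl] at hxS
      push_cast at hxS; linarith
    have key := setintegral_gauss_tendsto_zero hδ x₀ _ hsub
    refine key.congr' ?_
    filter_upwards [self_mem_nhdsWithin] with h hh
    exact (norm_L_sq hh x₀ p₀ φ hφ L hL).symm


end
end

section
/- Localization of coherent states under the momentum-side projection E_p: for (x₀,p₀) ∈ ℝ² with p₀ ∉ ℤ, if ⌊p₀⌋ is even then ‖E_p φ_ħ^{x₀,p₀}‖² → 1 as ħ → 0⁺, while if ⌊p₀⌋ is odd then ‖E_p φ_ħ^{x₀,p₀}‖² → 0 as ħ → 0⁺. -/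
open MeasureTheory Filter Topology

noncomputable section

lemma norm_sq_L2 (f : HL2) : ‖f‖ ^ 2 = ∫ x : ℝ, ‖f x‖ ^ 2 := by
  have h1 : ‖f‖ ^ 2 = RCLike.re (inner ℂ f f) := (inner_self_eq_norm_sq (𝕜 := ℂ) f).symm
  rw [h1, L2.inner_def, ← integral_re (L2.integrable_inner f f)]
  congr 1
  ext x
  simp [RCLike.inner_apply, Complex.mul_re, Complex.sq_norm, Complex.normSq_apply]
  rw [← Complex.ofReal_pow, Complex.ofReal_re, Complex.sq_norm, Complex.normSq_apply]

lemma norm_fourier_coherent (hbar x₀ p₀ p : ℝ) (hh : 0 < hbar) :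
    ‖fourierFormula hbar (coherent hbar x₀ p₀) p‖ ^ 2
      = (Real.pi * hbar) ^ (-(1/2 : ℝ)) * Real.exp (-(p - p₀)^2 / hbar) := by
  have hne : (hbar : ℂ) ≠ 0 := by exact_mod_cast hh.ne'
  set b : ℂ := -(1/(2*(hbar:ℂ))) with hb_def
  set c : ℂ := ((x₀ : ℂ) + Complex.I * ((p₀ : ℂ) - (p : ℂ))) / hbar with hc_def
  set d : ℂ := -((x₀:ℂ)^2/(2*hbar)) - Complex.I * ((p₀:ℂ) * x₀/(2*hbar)) with hd_def
  have hb : b.re < 0 := by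
    simp [hb_def, div_eq_mul_inv]
    positivity
  set C : ℝ := (Real.pi * hbar) ^ (-(1/4 : ℝ)) with hC_def
  have h1 : ∀ x : ℝ, Complex.exp (-(Complex.I * (p : ℂ) * (x : ℂ) / (hbar : ℂ))) *
      coherent hbar x₀ p₀ x = (C : ℂ) * Complex.exp (b * x^2 + c * x + d) := by
    intro x
    unfold coherent
    rw [show Complex.exp (-(Complex.I * (p : ℂ) * (x : ℂ) / (hbar : ℂ))) *
        ((C:ℂ) * Complex.exp (-((((x:ℝ) - x₀) ^ 2 / (2 * hbar) : ℝ) : ℂ)) *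
          Complex.exp (Complex.I * ((p₀ * x / hbar : ℝ) : ℂ)
            - Complex.I * ((p₀ * x₀ / (2 * hbar) : ℝ) : ℂ)))
      = (C:ℂ) * (Complex.exp (-(Complex.I * (p : ℂ) * (x : ℂ) / (hbar : ℂ))) *
          Complex.exp (-((((x:ℝ) - x₀) ^ 2 / (2 * hbar) : ℝ) : ℂ)) *
          Complex.exp (Complex.I * ((p₀ * x / hbar : ℝ) : ℂ)
            - Complex.I * ((p₀ * x₀ / (2 * hbar) : ℝ) : ℂ))) from by ring,
      ← Complex.exp_add, ← Complex.exp_add]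
    congr 2
    rw [hb_def, hc_def, hd_def]
    push_cast
    simp only [div_eq_mul_inv, mul_inv]
    ring
  have hint : (∫ x : ℝ, Complex.exp (-(Complex.I * (p : ℂ) * (x : ℂ) / (hbar : ℂ))) *
      coherent hbar x₀ p₀ x)
      = (C : ℂ) * ((↑Real.pi / -b) ^ (1/2 : ℂ) * Complex.exp (d - c^2/(4*b))) := by
    simp only [h1]
    rw [MeasureTheory.integral_const_mul, integral_cexp_quadratic hb c d]
  have hπb : (↑Real.pi / -b) = ((2 * Real.pi * hbar : ℝ) : ℂ) := by
    rw [hb_def]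
    push_cast
    field_simp
  have hpos : (0:ℝ) < 2 * Real.pi * hbar := by positivity
  have hcpow : ((2 * Real.pi * hbar : ℝ) : ℂ) ^ (1/2 : ℂ)
      = ((Real.sqrt (2 * Real.pi * hbar) : ℝ) : ℂ) := by
    rw [show (1/2:ℂ) = ((1/2:ℝ):ℂ) by norm_num, ← Complex.ofReal_cpow hpos.le,
      Real.sqrt_eq_rpow]
  have hdc : d - c^2/(4*b) = ((-((p - p₀)^2/(2*hbar)) : ℝ) : ℂ)
      + Complex.I * ((x₀ * (p₀ - p) / hbar - p₀ * x₀ / (2*hbar) : ℝ) : ℂ) := by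
    rw [hb_def, hc_def, hd_def]
    push_cast
    have hI : (Complex.I:ℂ)^2 = -1 := Complex.I_sq
    field_simp
    ring_nf
    rw [hI]
    ring
  rw [fourierFormula, hint, hπb, hcpow, hdc]
  have hSpos : (0:ℝ) < Real.sqrt (2 * Real.pi * hbar) := Real.sqrt_pos.mpr hpos
  have hCpos : (0:ℝ) < C := by rw [hC_def]; positivity
  have hre : ((((-((p - p₀)^2/(2*hbar)) : ℝ)) : ℂ)
      + Complex.I * ((x₀ * (p₀ - p) / hbar - p₀ * x₀ / (2*hbar) : ℝ) : ℂ)).re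
      = -((p - p₀)^2/(2*hbar)) := by
    simp only [Complex.add_re, Complex.ofReal_re, Complex.mul_re, Complex.I_re,
      Complex.ofReal_im, Complex.I_im]
    ring
  simp only [norm_mul, norm_inv, Complex.norm_real, Real.norm_eq_abs,
    Complex.norm_exp, hre, abs_of_pos hSpos, abs_of_pos hCpos]
  rw [show (Real.sqrt (2*Real.pi*hbar))⁻¹ * (C * (Real.sqrt (2*Real.pi*hbar) *
      Real.exp (-((p - p₀)^2/(2*hbar))))) = C * Real.exp (-((p - p₀)^2/(2*hbar))) from by
    field_simp]
  rw [mul_pow, ← Real.exp_nat_mul]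
  have hC2 : C^2 = (Real.pi * hbar) ^ (-(1/2:ℝ)) := by
    rw [hC_def, ← Real.rpow_natCast ((Real.pi*hbar) ^ (-(1/4:ℝ))) 2,
      ← Real.rpow_mul (by positivity)]
    norm_num
  rw [hC2]
  congr 1
  push_cast
  field_simp

lemma floor_add_eq (p₀ : ℝ) (hp₀ : ∀ k : ℤ, p₀ ≠ (k : ℝ)) {t : ℝ}
    (ht : |t| < min (p₀ - ⌊p₀⌋) (⌊p₀⌋ + 1 - p₀)) : ⌊p₀ + t⌋ = ⌊p₀⌋ := by
  have ha := abs_lt.mp (lt_of_lt_of_le ht (min_le_left _ _))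
  have hb := abs_lt.mp (lt_of_lt_of_le ht (min_le_right _ _))
  rw [Int.floor_eq_iff]
  constructor
  · linarith [ha.1]
  · push_cast
    linarith [hb.2]

lemma eps_pos (p₀ : ℝ) (hp₀ : ∀ k : ℤ, p₀ ≠ (k : ℝ)) :
    0 < min (p₀ - ⌊p₀⌋) (⌊p₀⌋ + 1 - p₀) := by
  apply lt_min
  · have := lt_of_le_of_ne (Int.floor_le p₀) (Ne.symm (hp₀ ⌊p₀⌋))
    linarith
  · have := Int.lt_floor_add_one p₀
    push_cast
    linarith

lemma tendsto_gauss_ind (p₀ : ℝ) (hp₀ : ∀ k : ℤ, p₀ ≠ (k : ℝ)) :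
    Filter.Tendsto (fun hbar : ℝ => ∫ p : ℝ, (if Even ⌊p⌋ then (1:ℝ) else 0) *
        ((Real.pi * hbar) ^ (-(1/2 : ℝ)) * Real.exp (-(p - p₀)^2 / hbar)))
      (𝓝[>] (0:ℝ)) (𝓝 ((if Even ⌊p₀⌋ then (1:ℝ) else 0))) := by
  have hπ : (0:ℝ) < Real.pi := Real.pi_pos
  set ind : ℝ → ℝ := fun p => if Even ⌊p⌋ then (1:ℝ) else 0 with hind
  have key : ∀ hbar : ℝ, 0 < hbar →
      (∫ p : ℝ, ind p * ((Real.pi * hbar) ^ (-(1/2 : ℝ)) * Real.exp (-(p - p₀)^2 / hbar)))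
      = ∫ u : ℝ, ind (p₀ + Real.sqrt hbar * u) *
          (Real.pi ^ (-(1/2:ℝ)) * Real.exp (-u^2)) := by
    intro hbar hh
    have hs : (0:ℝ) < Real.sqrt hbar := Real.sqrt_pos.mpr hh
    set f : ℝ → ℝ := fun p => ind p * ((Real.pi * hbar) ^ (-(1/2 : ℝ)) *
      Real.exp (-(p - p₀)^2 / hbar)) with hf
    have e1 : (∫ p : ℝ, f p) = ∫ v : ℝ, f (p₀ + v) :=
      (integral_add_left_eq_self f p₀).symm
    have e2 : (∫ v : ℝ, f (p₀ + v)) = Real.sqrt hbar • ∫ u : ℝ, f (p₀ + Real.sqrt hbar * u) := by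
      rw [Measure.integral_comp_mul_left (fun v => f (p₀ + v)) (Real.sqrt hbar),
        abs_of_pos (by positivity), smul_smul, mul_inv_cancel₀ hs.ne', one_smul]
    rw [e1, e2, ← integral_smul]
    congr 1
    ext u
    simp only [hf, smul_eq_mul]
    have hsq : Real.sqrt hbar ^ 2 = hbar := Real.sq_sqrt hh.le
    have hrw : (Real.pi * hbar) ^ (-(1/2:ℝ)) = Real.pi ^ (-(1/2:ℝ)) * hbar ^ (-(1/2:ℝ)) :=
      Real.mul_rpow hπ.le hh.le
    have hexp : Real.exp (-(p₀ + Real.sqrt hbar * u - p₀)^2 / hbar) = Real.exp (-u^2) := by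
      congr 1
      rw [add_sub_cancel_left, mul_pow, hsq]
      field_simp
    rw [hexp, hrw]
    have hcancel : Real.sqrt hbar * hbar ^ (-(1/2:ℝ)) = 1 := by
      rw [Real.sqrt_eq_rpow, ← Real.rpow_add hh]
      norm_num
    set A := Real.pi ^ (-(1/2:ℝ))
    set B := hbar ^ (-(1/2:ℝ))
    linear_combination (ind (p₀ + Real.sqrt hbar * u) * A * Real.exp (-u^2)) * hcancel
  set ε := min (p₀ - ⌊p₀⌋) (⌊p₀⌋ + 1 - p₀) with hε_def
  have hε : 0 < ε := eps_pos p₀ hp₀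
  set F : ℝ → ℝ → ℝ := fun hbar u => ind (p₀ + Real.sqrt hbar * u) *
    (Real.pi ^ (-(1/2:ℝ)) * Real.exp (-u^2)) with hF
  set flim : ℝ → ℝ := fun u => ind p₀ * (Real.pi ^ (-(1/2:ℝ)) * Real.exp (-u^2)) with hflim
  have hm : Measurable ind := by
    apply Measurable.ite _ measurable_const measurable_const
    exact Int.measurable_floor (MeasurableSet.of_discrete (s := {n : ℤ | Even n}))
  have hmain : Filter.Tendsto (fun hbar => ∫ u : ℝ, F hbar u) (𝓝[>] (0:ℝ))
      (𝓝 (∫ u : ℝ, flim u)) := by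
    apply tendsto_integral_filter_of_dominated_convergence
      (bound := fun u : ℝ => Real.pi ^ (-(1/2:ℝ)) * Real.exp (-u^2))
    · apply Filter.Eventually.of_forall
      intro hbar
      apply Measurable.aestronglyMeasurable
      exact ((hm.comp (measurable_const.add (measurable_const.mul measurable_id))).mul
        ((Real.continuous_exp.comp (continuous_pow 2).neg).measurable.const_mul _))
    · apply Filter.Eventually.of_forall
      intro hbar
      apply Filter.Eventually.of_forall
      intro u
      rw [hF]
      simp only [hind]
      split_ifs with h
      · rw [one_mul, Real.norm_eq_abs, abs_of_nonneg (by positivity)]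
      · rw [zero_mul, norm_zero]
        positivity
    · have h1 : Integrable (fun x : ℝ => Real.exp (-1 * x^2)) volume :=
        integrable_exp_neg_mul_sq one_pos
      simp only [neg_one_mul] at h1
      exact h1.const_mul _
    · apply Filter.Eventually.of_forall
      intro u
      have hts : Filter.Tendsto (fun hbar : ℝ => Real.sqrt hbar * u) (𝓝[>] (0:ℝ)) (𝓝 0) := by
        have h0 : Filter.Tendsto Real.sqrt (𝓝[>] (0:ℝ)) (𝓝 0) := by
          have := Real.continuous_sqrt.tendsto 0
          simp only [Real.sqrt_zero] at this
          exact this.mono_left nhdsWithin_le_nhds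
        simpa using h0.mul_const u
      have h2 : ∀ᶠ hbar in 𝓝[>] (0:ℝ), |Real.sqrt hbar * u| < ε := by
        have := hts (Metric.ball_mem_nhds (0:ℝ) hε)
        filter_upwards [this] with hbar hb
        rw [Set.mem_preimage, Metric.mem_ball, Real.dist_eq, sub_zero] at hb
        exact hb
      apply Filter.Tendsto.congr' _ tendsto_const_nhds
      filter_upwards [h2] with hbar hlt
      rw [hflim, hF]
      simp only [hind]
      rw [floor_add_eq p₀ hp₀ hlt]
  have hval : (∫ u : ℝ, flim u) = (if Even ⌊p₀⌋ then (1:ℝ) else 0) := by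
    have hg : (∫ u : ℝ, Real.exp (-u^2)) = Real.sqrt Real.pi := by
      have := integral_gaussian 1
      simpa using this
    have h1 : Real.pi ^ (-(1/2:ℝ)) * Real.sqrt Real.pi = 1 := by
      rw [Real.sqrt_eq_rpow, ← Real.rpow_add Real.pi_pos]
      norm_num
    rw [hflim]
    rw [MeasureTheory.integral_const_mul, MeasureTheory.integral_const_mul, hg, hind]
    simp only []
    split_ifs with h
    · rw [one_mul, h1]
    · rw [zero_mul]
  rw [hval] at hmain
  apply hmain.congr'
  apply Filter.eventuallyEq_of_mem self_mem_nhdsWithin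
  intro hbar hh
  exact (key hbar hh).symm

lemma coherent_integrable (hbar x₀ p₀ : ℝ) (hh : 0 < hbar) :
    Integrable (coherent hbar x₀ p₀) volume := by
  set C : ℝ := (Real.pi * hbar) ^ (-(1/4 : ℝ)) with hC_def
  have hb : (0:ℝ) < 1/(2*hbar) := by positivity
  apply Integrable.mono'
    (g := fun x : ℝ => C * Real.exp (-(1/(2*hbar)) * (x - x₀)^2))
  · exact ((integrable_exp_neg_mul_sq hb).comp_sub_right x₀).const_mul C
  · apply Continuous.aestronglyMeasurable
    unfold coherent
    fun_prop
  · apply Filter.Eventually.of_forall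
    intro x
    unfold coherent
    rw [norm_mul, norm_mul]
    have h1 : ‖((C : ℝ) : ℂ)‖ = C := by
      rw [Complex.norm_real, Real.norm_eq_abs, abs_of_pos]
      rw [hC_def]; positivity
    have h2 : ‖Complex.exp (-(((x - x₀) ^ 2 / (2 * hbar) : ℝ) : ℂ))‖
        = Real.exp (-((x - x₀) ^ 2 / (2 * hbar))) := by
      rw [Complex.norm_exp, Complex.neg_re, Complex.ofReal_re]
    have h3 : ‖Complex.exp (Complex.I * ((p₀ * x / hbar : ℝ) : ℂ)
        - Complex.I * ((p₀ * x₀ / (2 * hbar) : ℝ) : ℂ))‖ = 1 := by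
      rw [Complex.norm_exp]
      rw [show (Complex.I * ((p₀ * x / hbar : ℝ) : ℂ)
        - Complex.I * ((p₀ * x₀ / (2 * hbar) : ℝ) : ℂ)).re = 0 from by
        simp only [Complex.sub_re, Complex.mul_re, Complex.I_re, Complex.ofReal_re,
          Complex.I_im, Complex.ofReal_im]
        ring]
      exact Real.exp_zero
    rw [h1, h2, h3, mul_one]
    apply le_of_eq
    congr 1
    ring

/-- Localization of coherent states under the momentum-side projection
`E_p = 𝓕_ħ⁻¹ (mult. by χ_e) 𝓕_ħ`: for `p₀ ∉ ℤ`, if `⌊p₀⌋` is even then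
`‖E_p φ_ħ^{x₀,p₀}‖² → 1` and if `⌊p₀⌋` is odd then `‖E_p φ_ħ^{x₀,p₀}‖² → 0`, as `ħ → 0⁺`. -/
theorem coherent_localization_Ep
    (𝓕 : ℝ → HL2 ≃ₗᵢ[ℂ] HL2)
    (h𝓕 : ∀ hbar : ℝ, 0 < hbar → ∀ f : HL2, Integrable (⇑f) volume →
      ⇑(𝓕 hbar f) =ᵐ[volume] fourierFormula hbar (⇑f))
    (Ep : ℝ → HL2 →L[ℂ] HL2)
    (hEp : ∀ hbar : ℝ, 0 < hbar → ∀ f : HL2,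
      ⇑(𝓕 hbar (Ep hbar f)) =ᵐ[volume] fun p => chiE p * (𝓕 hbar f) p)
    (φ : ℝ → ℝ → ℝ → HL2)
    (hφ : ∀ hbar : ℝ, 0 < hbar → ∀ x₀ p₀ : ℝ,
      ⇑(φ hbar x₀ p₀) =ᵐ[volume] coherent hbar x₀ p₀)
    (x₀ p₀ : ℝ) (hp₀ : ∀ k : ℤ, p₀ ≠ (k : ℝ)) :
    (Even ⌊p₀⌋ →
      Tendsto (fun hbar : ℝ => ‖Ep hbar (φ hbar x₀ p₀)‖ ^ 2) (𝓝[>] (0 : ℝ)) (𝓝 1)) ∧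
    (Odd ⌊p₀⌋ →
      Tendsto (fun hbar : ℝ => ‖Ep hbar (φ hbar x₀ p₀)‖ ^ 2) (𝓝[>] (0 : ℝ)) (𝓝 0))  := by
  have hπ : (0:ℝ) < Real.pi := Real.pi_pos
  have main : Filter.Tendsto (fun hbar : ℝ => ‖Ep hbar (φ hbar x₀ p₀)‖ ^ 2)
      (𝓝[>] (0:ℝ)) (𝓝 ((if Even ⌊p₀⌋ then (1:ℝ) else 0))) := by
    apply (tendsto_gauss_ind p₀ hp₀).congr'
    filter_upwards [self_mem_nhdsWithin] with hbar hh'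
    have hh : (0:ℝ) < hbar := hh'
    have hφint : Integrable (⇑(φ hbar x₀ p₀)) volume :=
      (coherent_integrable hbar x₀ p₀ hh).congr (hφ hbar hh x₀ p₀).symm
    have hFφ : ⇑(𝓕 hbar (φ hbar x₀ p₀)) =ᵐ[volume] fourierFormula hbar (⇑(φ hbar x₀ p₀)) :=
      h𝓕 hbar hh _ hφint
    have hFcoh : fourierFormula hbar (⇑(φ hbar x₀ p₀))
        = fourierFormula hbar (coherent hbar x₀ p₀) := by
      funext q
      unfold fourierFormula
      congr 1
      apply integral_congr_ae
      filter_upwards [hφ hbar hh x₀ p₀] with x hx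
      rw [hx]
    have h3 : ⇑(𝓕 hbar (Ep hbar (φ hbar x₀ p₀))) =ᵐ[volume]
        fun q => chiE q * fourierFormula hbar (coherent hbar x₀ p₀) q := by
      filter_upwards [hEp hbar hh (φ hbar x₀ p₀), hFφ] with q h1 h2
      rw [h1, h2, hFcoh]
    calc (∫ p : ℝ, (if Even ⌊p⌋ then (1:ℝ) else 0) *
            ((Real.pi * hbar) ^ (-(1/2 : ℝ)) * Real.exp (-(p - p₀)^2 / hbar)))
        = ∫ q : ℝ, ‖chiE q * fourierFormula hbar (coherent hbar x₀ p₀) q‖ ^ 2 := by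
          apply integral_congr_ae
          apply Filter.Eventually.of_forall
          intro q
          dsimp only
          rw [norm_mul, mul_pow, norm_fourier_coherent hbar x₀ p₀ q hh]
          unfold chiE
          split_ifs with h
          · simp
          · simp
      _ = ∫ q : ℝ, ‖(𝓕 hbar (Ep hbar (φ hbar x₀ p₀))) q‖ ^ 2 := by
          apply integral_congr_ae
          filter_upwards [h3] with q hq
          rw [hq]
      _ = ‖𝓕 hbar (Ep hbar (φ hbar x₀ p₀))‖ ^ 2 := (norm_sq_L2 _).symm
      _ = ‖Ep hbar (φ hbar x₀ p₀)‖ ^ 2 := by rw [LinearIsometryEquiv.norm_map]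
  constructor
  · intro he
    rw [if_pos he] at main
    exact main
  · intro ho
    rw [if_neg (Int.not_even_iff_odd.mpr ho)] at main
    exact main

end
end

section
/- Invariance of periodic boundary conditions: suppose ħ = 1/(2πN) for some positive integer N (i.e. Planck's constant h = 2πħ = 1/N). Then the baker's map propagator satisfies the intertwining relation X^{1}∘F = F∘X^{2} as operators on L²(ℝ), where X^s is multiplication by e^{isx/ħ}. -/
open MeasureTheory Filter Topology

noncomputable section

/-- Invariance of periodic boundary conditions: if `ħ = 1/(2πN)` for a positive integer `N`
(i.e. Planck's constant `h = 2πħ = 1/N`), then the baker's map propagator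
`F = S (L + X^{−1} R)(E_p + Y^{−1/2} O_p)` satisfies `X¹ F = F X²`. -/
theorem bakerPropagator_intertwines_X (hbar : ℝ) (hhb : 0 < hbar)
    (hN : ∃ N : ℕ, 0 < N ∧ hbar = 1 / (2 * Real.pi * N))
    (𝓕 : HL2 ≃ₗᵢ[ℂ] HL2)
    (h𝓕 : ∀ f : HL2, Integrable (⇑f) volume → ⇑(𝓕 f) =ᵐ[volume] fourierFormula hbar (⇑f))
    (L R Ep Op S : HL2 →L[ℂ] HL2) (X Y : ℝ → HL2 →L[ℂ] HL2)
    (hL : ∀ f : HL2, ⇑(L f) =ᵐ[volume] fun x => chiL x * f x)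
    (hR : ∀ f : HL2, ⇑(R f) =ᵐ[volume] fun x => chiR x * f x)
    (hEp : ∀ f : HL2, ⇑(𝓕 (Ep f)) =ᵐ[volume] fun p => chiE p * (𝓕 f) p)
    (hOp : ∀ f : HL2, ⇑(𝓕 (Op f)) =ᵐ[volume] fun p => chiO p * (𝓕 f) p)
    (hX : ∀ s : ℝ, ∀ f : HL2,
      ⇑(X s f) =ᵐ[volume] fun x => Complex.exp (Complex.I * s * x / hbar) * f x)
    (hY : ∀ s : ℝ, ∀ f : HL2, ⇑(Y s f) =ᵐ[volume] fun x => f (x + s))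
    (hS : ∀ f : HL2, ⇑(S f) =ᵐ[volume] fun x => ((Real.sqrt 2 : ℝ) : ℂ)⁻¹ * f (x / 2)) :
    X 1 ∘L (S ∘L (L + X (-1) ∘L R) ∘L (Ep + Y (-(1/2)) ∘L Op))
      = (S ∘L (L + X (-1) ∘L R) ∘L (Ep + Y (-(1/2)) ∘L Op)) ∘L X 2 := by
  classical
  obtain ⟨N, hNpos, hNe⟩ := hN
  have hπ : (Real.pi : ℂ) ≠ 0 := by exact_mod_cast Real.pi_ne_zero
  have hNC : ((N : ℝ) : ℂ) ≠ 0 := by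
    exact_mod_cast Nat.cast_ne_zero.mpr hNpos.ne'
  have hbC : (hbar : ℂ) ≠ 0 := by exact_mod_cast hhb.ne'
  -- exponential identities
  have exp_one_half : ∀ x : ℝ,
      Complex.exp (Complex.I * ((1:ℝ):ℂ) * (x:ℂ) / (hbar:ℂ))
        = Complex.exp (Complex.I * ((2:ℝ):ℂ) * ((x/2 : ℝ):ℂ) / (hbar:ℂ)) := by
    intro x; congr 1; push_cast; ring
  have exp_shift : ∀ x : ℝ,
      Complex.exp (Complex.I * ((2:ℝ):ℂ) * ((x + -(1/2) : ℝ):ℂ) / (hbar:ℂ))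
        = Complex.exp (Complex.I * ((2:ℝ):ℂ) * (x:ℂ) / (hbar:ℂ)) := by
    intro x
    have key : Complex.I * ((2:ℝ):ℂ) * ((x + -(1/2) : ℝ):ℂ) / (hbar:ℂ)
        = Complex.I * ((2:ℝ):ℂ) * (x:ℂ) / (hbar:ℂ)
          + ((-(N:ℤ) : ℤ) : ℂ) * (2 * (Real.pi:ℂ) * Complex.I) := by
      rw [hNe]
      push_cast
      field_simp
    rw [key, Complex.exp_add, Complex.exp_int_mul_two_pi_mul_I, mul_one]
  -- measure-theoretic helpers
  have qmp_shift : ∀ c : ℝ,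
      Measure.QuasiMeasurePreserving (fun x : ℝ => x + c) volume volume := fun c =>
    (measurePreserving_add_right volume c).quasiMeasurePreserving
  have qmp_half : Measure.QuasiMeasurePreserving (fun x : ℝ => x / 2) volume volume := by
    refine ⟨measurable_id.div_const 2, ?_⟩
    have h2 : (fun x : ℝ => x / 2) = (· * (2⁻¹ : ℝ)) := by
      funext x; rw [div_eq_mul_inv]
    rw [h2, Real.map_volume_mul_right (by norm_num : (2⁻¹:ℝ) ≠ 0)]
    exact Measure.smul_absolutelyContinuous
  have comp_ae : ∀ {g h : ℝ → ℂ} {τ : ℝ → ℝ},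
      Measure.QuasiMeasurePreserving τ volume volume → g =ᵐ[volume] h →
      (fun x => g (τ x)) =ᵐ[volume] (fun x => h (τ x)) := by
    intro g h τ hτ hg
    exact hτ.ae_eq_comp hg
  -- the translation operator on the Fourier side
  have mp2 : MeasurePreserving (fun p : ℝ => p + (-2:ℝ)) volume volume :=
    measurePreserving_add_right volume (-2)
  set T : HL2 → HL2 := fun g =>
    Lp.compMeasurePreserving (E := ℂ) (p := 2) (fun p : ℝ => p + (-2:ℝ)) mp2 g with hT
  have hTcoe : ∀ g : HL2, ⇑(T g) =ᵐ[volume] fun p => g (p + (-2:ℝ)) := fun g =>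
    Lp.coeFn_compMeasurePreserving g mp2
  have hTcont : Continuous T := (Lp.isometry_compMeasurePreserving mp2).continuous
  -- integrability of X 2 f
  have hXint : ∀ f : HL2, Integrable (⇑f) volume → Integrable (⇑(X 2 f)) volume := by
    intro f hf
    have hcont : Continuous fun x : ℝ =>
        Complex.exp (Complex.I * ((2:ℝ):ℂ) * (x:ℂ) / (hbar:ℂ)) := by
      fun_prop
    have hb : Integrable (fun x : ℝ =>
        Complex.exp (Complex.I * ((2:ℝ):ℂ) * (x:ℂ) / (hbar:ℂ)) * f x) volume := by
      refine hf.bdd_mul hcont.aestronglyMeasurable (c := 1) (Eventually.of_forall fun x => ?_)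
      have hrw : Complex.I * ((2:ℝ):ℂ) * (x:ℂ) / (hbar:ℂ)
          = ((2 * x / hbar : ℝ) : ℂ) * Complex.I := by push_cast; ring
      rw [hrw]
      rw [Complex.norm_exp_ofReal_mul_I]
    exact hb.congr (hX 2 f).symm
  -- Fourier transform intertwines X 2 with translation by -2
  have hshift : ∀ f : HL2, 𝓕 (X 2 f) = T (𝓕 f) := by
    have hc1 : Continuous fun f : HL2 => 𝓕 (X 2 f) :=
      𝓕.continuous.comp (X 2).continuous
    have hc2 : Continuous fun f : HL2 => T (𝓕 f) := hTcont.comp 𝓕.continuous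
    have hdense : Dense (Lp.simpleFunc ℂ 2 (volume : Measure ℝ) : Set HL2) :=
      Lp.simpleFunc.dense (by norm_num)
    have heq : Set.EqOn (fun f : HL2 => 𝓕 (X 2 f)) (fun f : HL2 => T (𝓕 f))
        (Lp.simpleFunc ℂ 2 (volume : Measure ℝ) : Set HL2) := by
      intro f hf
      have hint : Integrable (⇑f) volume := by
        have h1 := Lp.simpleFunc.toSimpleFunc_eq_toFun
          (⟨f, hf⟩ : Lp.simpleFunc ℂ 2 (volume : Measure ℝ))
        have h2 := Lp.simpleFunc.memLp
          (⟨f, hf⟩ : Lp.simpleFunc ℂ 2 (volume : Measure ℝ))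
        exact ((SimpleFunc.memLp_iff_integrable (by norm_num) (by norm_num)).mp h2).congr h1
      have hXf := hXint f hint
      apply Lp.ext (μ := (volume : Measure ℝ))
      have lhs := h𝓕 (X 2 f) hXf
      have rhs := (hTcoe (𝓕 f)).trans (comp_ae (qmp_shift (-2)) (h𝓕 f hint))
      refine lhs.trans (.trans ?_ rhs.symm)
      have hmid : (fun p => fourierFormula hbar (⇑(X 2 f)) p)
          =ᵐ[volume] fun p => fourierFormula hbar (⇑f) (p + (-2:ℝ)) := by
        refine Eventually.of_forall fun p => ?_
        show fourierFormula hbar (⇑(X 2 f)) p = fourierFormula hbar (⇑f) (p + (-2:ℝ))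
        unfold fourierFormula
        congr 1
        refine integral_congr_ae ?_
        filter_upwards [hX 2 f] with x hx
        rw [hx, ← mul_assoc, ← Complex.exp_add]
        congr 1
        push_cast
        ring
      exact hmid
    have := Continuous.ext_on hdense hc1 hc2 heq
    exact fun f => congrFun this f
  have hshift_coe : ∀ f : HL2, ⇑(𝓕 (X 2 f)) =ᵐ[volume] fun p => (𝓕 f) (p + (-2:ℝ)) := by
    intro f; rw [hshift f]; exact hTcoe (𝓕 f)
  -- periodicity of chiE and chiO
  have floor_shift : ∀ p : ℝ, ⌊p + (-2:ℝ)⌋ = ⌊p⌋ + (-2 : ℤ) := by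
    intro p
    rw [show ((-2:ℝ)) = ((-2 : ℤ) : ℝ) by norm_num, Int.floor_add_intCast]
  have chiE_shift : ∀ p : ℝ, chiE (p + (-2:ℝ)) = chiE p := by
    intro p
    unfold chiE
    rw [floor_shift p]
    have hpar : Even (⌊p⌋ + (-2:ℤ)) ↔ Even ⌊p⌋ := by
      rw [Int.even_iff, Int.even_iff]; omega
    simp only [hpar]
  have chiO_shift : ∀ p : ℝ, chiO (p + (-2:ℝ)) = chiO p := by
    intro p
    unfold chiO
    rw [floor_shift p]
    have hpar : Odd (⌊p⌋ + (-2:ℤ)) ↔ Odd ⌊p⌋ := by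
      rw [Int.odd_iff, Int.odd_iff]; omega
    simp only [hpar]
  -- commutation with Ep and Op
  have hcommEp : ∀ f : HL2, X 2 (Ep f) = Ep (X 2 f) := by
    intro f
    apply 𝓕.injective
    apply Lp.ext (μ := (volume : Measure ℝ))
    have lhs := (hshift_coe (Ep f)).trans (comp_ae (qmp_shift (-2)) (hEp f))
    have rhs := hEp (X 2 f)
    refine lhs.trans (.trans ?_ rhs.symm)
    filter_upwards [hshift_coe f] with p hp
    rw [chiE_shift p, hp]
  have hcommOp : ∀ f : HL2, X 2 (Op f) = Op (X 2 f) := by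
    intro f
    apply 𝓕.injective
    apply Lp.ext (μ := (volume : Measure ℝ))
    have lhs := (hshift_coe (Op f)).trans (comp_ae (qmp_shift (-2)) (hOp f))
    have rhs := hOp (X 2 f)
    refine lhs.trans (.trans ?_ rhs.symm)
    filter_upwards [hshift_coe f] with p hp
    rw [chiO_shift p, hp]
  -- commutation with Y (-(1/2))
  have hcommY : ∀ f : HL2, X 2 (Y (-(1/2)) f) = Y (-(1/2)) (X 2 f) := by
    intro f
    apply Lp.ext (μ := (volume : Measure ℝ))
    have lhs : ⇑(X 2 (Y (-(1/2)) f)) =ᵐ[volume]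
        fun x => Complex.exp (Complex.I * ((2:ℝ):ℂ) * (x:ℂ) / (hbar:ℂ)) * f (x + -(1/2)) := by
      filter_upwards [hX 2 (Y (-(1/2)) f), hY (-(1/2)) f] with x h1 h2
      rw [h1, h2]
    have rhs : ⇑(Y (-(1/2)) (X 2 f)) =ᵐ[volume]
        fun x => Complex.exp (Complex.I * ((2:ℝ):ℂ) * ((x + -(1/2) : ℝ):ℂ) / (hbar:ℂ))
          * f (x + -(1/2)) := by
      refine (hY (-(1/2)) (X 2 f)).trans ?_
      exact comp_ae (qmp_shift (-(1/2))) (hX 2 f)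
    refine lhs.trans (.trans ?_ rhs.symm)
    exact Eventually.of_forall fun x => by simp only [exp_shift x]
  -- commutation with multiplication operators
  have hcommL : ∀ f : HL2, X 2 (L f) = L (X 2 f) := by
    intro f
    apply Lp.ext (μ := (volume : Measure ℝ))
    have lhs : ⇑(X 2 (L f)) =ᵐ[volume]
        fun x => Complex.exp (Complex.I * ((2:ℝ):ℂ) * (x:ℂ) / (hbar:ℂ)) * (chiL x * f x) := by
      filter_upwards [hX 2 (L f), hL f] with x h1 h2
      rw [h1, h2]
    have rhs : ⇑(L (X 2 f)) =ᵐ[volume]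
        fun x => chiL x * (Complex.exp (Complex.I * ((2:ℝ):ℂ) * (x:ℂ) / (hbar:ℂ)) * f x) := by
      filter_upwards [hL (X 2 f), hX 2 f] with x h1 h2
      rw [h1, h2]
    refine lhs.trans (.trans ?_ rhs.symm)
    refine Eventually.of_forall fun x => ?_
    ring
  have hcommR : ∀ f : HL2, X 2 (R f) = R (X 2 f) := by
    intro f
    apply Lp.ext (μ := (volume : Measure ℝ))
    have lhs : ⇑(X 2 (R f)) =ᵐ[volume]
        fun x => Complex.exp (Complex.I * ((2:ℝ):ℂ) * (x:ℂ) / (hbar:ℂ)) * (chiR x * f x) := by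
      filter_upwards [hX 2 (R f), hR f] with x h1 h2
      rw [h1, h2]
    have rhs : ⇑(R (X 2 f)) =ᵐ[volume]
        fun x => chiR x * (Complex.exp (Complex.I * ((2:ℝ):ℂ) * (x:ℂ) / (hbar:ℂ)) * f x) := by
      filter_upwards [hR (X 2 f), hX 2 f] with x h1 h2
      rw [h1, h2]
    refine lhs.trans (.trans ?_ rhs.symm)
    refine Eventually.of_forall fun x => ?_
    ring
  have hcommX : ∀ f : HL2, X 2 (X (-1) f) = X (-1) (X 2 f) := by
    intro f
    apply Lp.ext (μ := (volume : Measure ℝ))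
    have lhs : ⇑(X 2 (X (-1) f)) =ᵐ[volume]
        fun x => Complex.exp (Complex.I * ((2:ℝ):ℂ) * (x:ℂ) / (hbar:ℂ)) *
          (Complex.exp (Complex.I * ((-1:ℝ):ℂ) * (x:ℂ) / (hbar:ℂ)) * f x) := by
      filter_upwards [hX 2 (X (-1) f), hX (-1) f] with x h1 h2
      rw [h1, h2]
    have rhs : ⇑(X (-1) (X 2 f)) =ᵐ[volume]
        fun x => Complex.exp (Complex.I * ((-1:ℝ):ℂ) * (x:ℂ) / (hbar:ℂ)) *
          (Complex.exp (Complex.I * ((2:ℝ):ℂ) * (x:ℂ) / (hbar:ℂ)) * f x) := by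
      filter_upwards [hX (-1) (X 2 f), hX 2 f] with x h1 h2
      rw [h1, h2]
    refine lhs.trans (.trans ?_ rhs.symm)
    refine Eventually.of_forall fun x => ?_
    ring
  -- commutation with the squeezing operator
  have hXS : ∀ g : HL2, X 1 (S g) = S (X 2 g) := by
    intro g
    apply Lp.ext (μ := (volume : Measure ℝ))
    have lhs : ⇑(X 1 (S g)) =ᵐ[volume]
        fun x => Complex.exp (Complex.I * ((1:ℝ):ℂ) * (x:ℂ) / (hbar:ℂ)) *
          (((Real.sqrt 2 : ℝ) : ℂ)⁻¹ * g (x / 2)) := by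
      filter_upwards [hX 1 (S g), hS g] with x h1 h2
      rw [h1, h2]
    have rhs : ⇑(S (X 2 g)) =ᵐ[volume]
        fun x => ((Real.sqrt 2 : ℝ) : ℂ)⁻¹ *
          (Complex.exp (Complex.I * ((2:ℝ):ℂ) * ((x/2 : ℝ):ℂ) / (hbar:ℂ)) * g (x / 2)) := by
      refine (hS (X 2 g)).trans ?_
      have := comp_ae qmp_half (hX 2 g)
      filter_upwards [this] with x hx
      rw [hx]
    refine lhs.trans (.trans ?_ rhs.symm)
    refine Eventually.of_forall fun x => ?_
    simp only [exp_one_half x]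
    ring
  -- assemble
  ext f
  simp only [ContinuousLinearMap.comp_apply, ContinuousLinearMap.add_apply]
  rw [← hcommEp f, ← hcommOp f, ← hcommY (Op f), ← map_add (X 2),
    ← hcommL (Ep f + Y (-(1/2)) (Op f)), ← hcommR (Ep f + Y (-(1/2)) (Op f)),
    ← hcommX (R (Ep f + Y (-(1/2)) (Op f))), ← map_add (X 2), ← hXS]

end
end
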